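/- arXiv:2112.01175 — 6 statements merged into one kernel-verified Lean document; each statement's English description precedes it below -/
import Mathlib

section
/- Let (X, μ) be a finite measure space, and let (T_t)_{t∈ℝ} be a flow of measurable, measure-preserving bijections of X (T_0 = id, T_{t+s} = T_t ∘ T_s, and each T_t preserves μ). Let C > 0 and let ρ₀ : X → ℝ be measurable with 0 ≤ ρ₀ ≤ C and ∫_X ρ₀ dμ = 1; for t ∈ ℝ set ρ_t(x) = ρ₀(T_{−t} x), and assume (t,x) ↦ ρ₀(T_{−t}x) is jointly measurable. Suppose ρ̄ : X → ℝ is measurable and for μ-a.e. x ∈ X, (1/T)·∫_1^{1+T} ρ_t(x) dt → ρ̄(x) as T → ∞. Then S_G(ρ₀) ≤ S_G(ρ̄), i.e. −∫_X ρ₀ log ρ₀ dμ ≤ −∫_X ρ̄ log ρ̄ dμ (Penrose–Gibbs theorem). -/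
open MeasureTheory Filter Real

/-- **Penrose–Gibbs theorem.** Let `(X, μ)` be a finite measure space and `(T t)_{t ∈ ℝ}` a
flow of measurable, measure-preserving bijections of `X`.  Let `ρ₀` be a bounded nonnegative
measurable density integrating to `1`, evolved by `ρ_t x = ρ₀ (T (-t) x)`, and suppose the
time averages `(1/T) ∫_1^{1+T} ρ_t x dt` converge a.e. to a measurable function `ρ̄`.  Then the
Gibbs entropy does not decrease: `-∫ ρ₀ log ρ₀ dμ ≤ -∫ ρ̄ log ρ̄ dμ`. -/
theorem penrose_gibbs
    {X : Type*} [MeasurableSpace X] (μ : Measure X) [IsFiniteMeasure μ]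
    (T : ℝ → X → X)
    (hTmeas : ∀ t, Measurable (T t))
    (hTbij : ∀ t, Function.Bijective (T t))
    (hT0 : T 0 = id)
    (hTadd : ∀ t s : ℝ, T (t + s) = T t ∘ T s)
    (hTpres : ∀ t, MeasurePreserving (T t) μ μ)
    (C : ℝ) (hC : 0 < C)
    (ρ₀ : X → ℝ) (hρ₀meas : Measurable ρ₀)
    (hρ₀nonneg : ∀ x, 0 ≤ ρ₀ x) (hρ₀le : ∀ x, ρ₀ x ≤ C)
    (hρ₀int : ∫ x, ρ₀ x ∂μ = 1)
    (hjoint : Measurable fun p : ℝ × X => ρ₀ (T (-p.1) p.2))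
    (ρbar : X → ℝ) (hρbarmeas : Measurable ρbar)
    (hconv : ∀ᵐ x ∂μ,
      Tendsto (fun τ : ℝ => (1 / τ) * ∫ t in Set.Icc (1:ℝ) (1 + τ), ρ₀ (T (-t) x))
        atTop (nhds (ρbar x))) :
    -∫ x, ρ₀ x * Real.log (ρ₀ x) ∂μ ≤ -∫ x, ρbar x * Real.log (ρbar x) ∂μ := by
  classical
  set φ : ℝ → ℝ := fun u => u * Real.log u with hφdef
  have hφcont : Continuous φ := Real.continuous_mul_log
  -- the flow maps are measurable equivalences, so integrals are preserved
  have key : ∀ t : ℝ, ∀ g : X → ℝ, ∫ x, g (T t x) ∂μ = ∫ x, g x ∂μ := by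
    intro t g
    have hli : ∀ x, T (-t) (T t x) = x := by
      intro x
      have := congrFun (hTadd (-t) t) x
      simp only [Function.comp_apply] at this
      rw [← this]; simp [hT0]
    have hri : ∀ x, T t (T (-t) x) = x := by
      intro x
      have := congrFun (hTadd t (-t)) x
      simp only [Function.comp_apply] at this
      rw [← this]; simp [hT0]
    let e : X ≃ᵐ X :=
      { toFun := T t
        invFun := T (-t)
        left_inv := hli
        right_inv := hri
        measurable_toFun := hTmeas t
        measurable_invFun := hTmeas (-t) }
    exact MeasurePreserving.integral_comp (hTpres t) e.measurableEmbedding g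
  -- bound M for φ on [0, C]
  obtain ⟨M, hM⟩ := (isCompact_Icc (a := (0:ℝ)) (b := C)).exists_bound_of_continuousOn
    hφcont.continuousOn
  -- measurability in t for fixed x
  have hmeas_t : ∀ x : X, Measurable fun t : ℝ => ρ₀ (T (-t) x) := fun x =>
    hjoint.comp (measurable_id.prodMk measurable_const)
  -- finite measure instances for the restricted measure
  have hvol : ∀ τ : ℝ, 0 < τ → volume (Set.Icc (1:ℝ) (1 + τ)) = ENNReal.ofReal τ := by
    intro τ hτ; rw [Real.volume_Icc]; ring_nf
  -- pointwise integrals are between 0 and τ*C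
  have hflowmem : ∀ t : ℝ, ∀ x : X, ρ₀ (T (-t) x) ∈ Set.Icc (0:ℝ) C := fun t x =>
    ⟨hρ₀nonneg _, hρ₀le _⟩
  have hint_t : ∀ x : X, ∀ τ : ℝ, 0 < τ →
      Integrable (fun t : ℝ => ρ₀ (T (-t) x)) (volume.restrict (Set.Icc (1:ℝ) (1 + τ))) := by
    intro x τ hτ
    refine Integrable.mono' (integrable_const C) ((hmeas_t x).aestronglyMeasurable) ?_
    filter_upwards with t
    rw [Real.norm_eq_abs, abs_of_nonneg (hρ₀nonneg _)]
    exact hρ₀le _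
  have hint_φt : ∀ x : X, ∀ τ : ℝ, 0 < τ →
      Integrable (fun t : ℝ => φ (ρ₀ (T (-t) x)))
        (volume.restrict (Set.Icc (1:ℝ) (1 + τ))) := by
    intro x τ hτ
    refine Integrable.mono' (integrable_const M)
      ((hφcont.measurable.comp (hmeas_t x)).aestronglyMeasurable) ?_
    filter_upwards with t
    exact hM _ (hflowmem t x)
  -- Jensen's inequality pointwise in x
  have jensen : ∀ τ : ℝ, 0 < τ → ∀ x : X,
      φ ((1 / τ) * ∫ t in Set.Icc (1:ℝ) (1 + τ), ρ₀ (T (-t) x)) ≤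
        (1 / τ) * ∫ t in Set.Icc (1:ℝ) (1 + τ), φ (ρ₀ (T (-t) x)) := by
    intro τ hτ x
    set ν := volume.restrict (Set.Icc (1:ℝ) (1 + τ)) with hν
    have hνuniv : ν Set.univ = ENNReal.ofReal τ := by
      rw [hν, Measure.restrict_apply_univ, hvol τ hτ]
    have : IsFiniteMeasure ν := ⟨by rw [hνuniv]; exact ENNReal.ofReal_lt_top⟩
    have : NeZero ν := by
      refine ⟨fun h => ?_⟩
      rw [h] at hνuniv
      simp only [Measure.coe_zero, Pi.zero_apply] at hνuniv
      exact (ENNReal.ofReal_pos.2 hτ).ne' hνuniv.symm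
    have hconv' : ConvexOn ℝ (Set.Icc (0:ℝ) C) φ :=
      Real.convexOn_mul_log.subset (Set.Icc_subset_Ici_self) (convex_Icc 0 C)
    have hJ := hconv'.map_average_le hφcont.continuousOn isClosed_Icc
      (Filter.Eventually.of_forall fun t => hflowmem t x) (hint_t x τ hτ) (hint_φt x τ hτ)
    rw [average_eq, average_eq, measureReal_def, ← hν, hνuniv, ENNReal.toReal_ofReal hτ.le] at hJ
    simpa [smul_eq_mul, one_div] using hJ
  -- the function x ↦ ∫ t φ(ρ_t x) dt is measurable, and Fubini gives its μ-integral
  have hFmeas : ∀ τ : ℝ, Measurable fun x : X =>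
      ∫ t in Set.Icc (1:ℝ) (1 + τ), φ (ρ₀ (T (-t) x)) := by
    intro τ
    have : StronglyMeasurable fun p : X × ℝ => φ (ρ₀ (T (-p.2) p.1)) :=
      ((hφcont.measurable.comp (hjoint.comp measurable_swap))).stronglyMeasurable
    exact this.integral_prod_right'.measurable
  have havgmeas : ∀ τ : ℝ, Measurable fun x : X =>
      ∫ t in Set.Icc (1:ℝ) (1 + τ), ρ₀ (T (-t) x) := by
    intro τ
    have : StronglyMeasurable fun p : X × ℝ => ρ₀ (T (-p.2) p.1) :=
      (hjoint.comp measurable_swap).stronglyMeasurable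
    exact this.integral_prod_right'.measurable
  -- bounds on the time averages
  have havg_mem : ∀ τ : ℝ, 0 < τ → ∀ x : X,
      (1 / τ) * (∫ t in Set.Icc (1:ℝ) (1 + τ), ρ₀ (T (-t) x)) ∈ Set.Icc (0:ℝ) C := by
    intro τ hτ x
    constructor
    · refine mul_nonneg (by positivity) ?_
      exact setIntegral_nonneg measurableSet_Icc fun t _ => hρ₀nonneg _
    · have h1 : (∫ t in Set.Icc (1:ℝ) (1 + τ), ρ₀ (T (-t) x)) ≤
          ∫ _t in Set.Icc (1:ℝ) (1 + τ), C := by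
        exact integral_mono (hint_t x τ hτ) (integrable_const C) fun t => hρ₀le _
      have h2 : (∫ _t in Set.Icc (1:ℝ) (1 + τ), C) = τ * C := by
        rw [setIntegral_const, measureReal_def, Real.volume_Icc]
        rw [show (1 + τ - 1) = τ by ring, ENNReal.toReal_ofReal hτ.le, smul_eq_mul]
      calc (1 / τ) * (∫ t in Set.Icc (1:ℝ) (1 + τ), ρ₀ (T (-t) x))
          ≤ (1 / τ) * (τ * C) := by
            apply mul_le_mul_of_nonneg_left _ (by positivity)
            rw [← h2]; exact h1
        _ = C := by field_simp
  -- Fubini: ∫_X ∫_t φ(ρ_t x) = τ * ∫_X φ(ρ₀)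
  have fubini : ∀ τ : ℝ, 0 < τ →
      (∫ x, ((1 / τ) * ∫ t in Set.Icc (1:ℝ) (1 + τ), φ (ρ₀ (T (-t) x))) ∂μ) =
        ∫ x, φ (ρ₀ x) ∂μ := by
    intro τ hτ
    set ν := volume.restrict (Set.Icc (1:ℝ) (1 + τ)) with hν
    have hνuniv : ν Set.univ = ENNReal.ofReal τ := by
      rw [hν, Measure.restrict_apply_univ, hvol τ hτ]
    have : IsFiniteMeasure ν := ⟨by rw [hνuniv]; exact ENNReal.ofReal_lt_top⟩
    have hprodint : Integrable (Function.uncurry fun x (t : ℝ) => φ (ρ₀ (T (-t) x)))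
        (μ.prod ν) := by
      refine Integrable.mono' (integrable_const M) ?_ ?_
      · exact ((hφcont.measurable.comp (hjoint.comp measurable_swap))).aestronglyMeasurable
      · filter_upwards with p
        exact hM _ (hflowmem p.2 p.1)
    have hswap := integral_integral_swap hprodint
    have hinner : ∀ t : ℝ, (∫ x, φ (ρ₀ (T (-t) x)) ∂μ) = ∫ x, φ (ρ₀ x) ∂μ := fun t =>
      key (-t) (fun x => φ (ρ₀ x))
    rw [integral_const_mul, hswap]
    have : (∫ t, ∫ x, φ (ρ₀ (T (-t) x)) ∂μ ∂ν) = ∫ _t, (∫ x, φ (ρ₀ x) ∂μ) ∂ν := by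
      exact integral_congr_ae (Filter.Eventually.of_forall hinner)
    rw [this, integral_const, measureReal_def, hνuniv, ENNReal.toReal_ofReal hτ.le, smul_eq_mul]
    field_simp
  -- the eventual inequality: ∫ φ(avg_τ) ≤ ∫ φ(ρ₀)
  have hineq : ∀ τ : ℝ, 0 < τ →
      (∫ x, φ ((1 / τ) * ∫ t in Set.Icc (1:ℝ) (1 + τ), ρ₀ (T (-t) x)) ∂μ) ≤
        ∫ x, φ (ρ₀ x) ∂μ := by
    intro τ hτ
    have hintL : Integrable
        (fun x => φ ((1 / τ) * ∫ t in Set.Icc (1:ℝ) (1 + τ), ρ₀ (T (-t) x))) μ := by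
      refine Integrable.mono' (integrable_const M)
        ((hφcont.measurable.comp ((havgmeas τ).const_mul (1 / τ))).aestronglyMeasurable) ?_
      filter_upwards with x
      exact hM _ (havg_mem τ hτ x)
    have hintR : Integrable
        (fun x => ((1 / τ) * ∫ t in Set.Icc (1:ℝ) (1 + τ), φ (ρ₀ (T (-t) x)))) μ := by
      refine Integrable.mono' (integrable_const M)
        (((hFmeas τ).const_mul (1 / τ)).aestronglyMeasurable) ?_
      filter_upwards with x
      set ν := volume.restrict (Set.Icc (1:ℝ) (1 + τ)) with hν
      have hb : (∫ t in Set.Icc (1:ℝ) (1 + τ), |φ (ρ₀ (T (-t) x))|) ≤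
          ∫ _t in Set.Icc (1:ℝ) (1 + τ), M := by
        refine integral_mono (hint_φt x τ hτ).abs (integrable_const M) fun t => ?_
        have := hM _ (hflowmem t x)
        rwa [Real.norm_eq_abs] at this
      have hMnn : 0 ≤ M := le_trans (norm_nonneg _) (hM 0 ⟨le_refl 0, hC.le⟩)
      have h2 : (∫ _t in Set.Icc (1:ℝ) (1 + τ), M) = τ * M := by
        rw [setIntegral_const, measureReal_def, Real.volume_Icc]
        rw [show (1 + τ - 1) = τ by ring, ENNReal.toReal_ofReal hτ.le, smul_eq_mul]
      rw [Real.norm_eq_abs, abs_mul, abs_of_pos (by positivity : (0:ℝ) < 1 / τ)]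
      calc (1 / τ) * |∫ t in Set.Icc (1:ℝ) (1 + τ), φ (ρ₀ (T (-t) x))|
          ≤ (1 / τ) * (∫ t in Set.Icc (1:ℝ) (1 + τ), |φ (ρ₀ (T (-t) x))|) := by
            apply mul_le_mul_of_nonneg_left _ (by positivity)
            simpa [Real.norm_eq_abs] using
              norm_integral_le_integral_norm (μ := volume.restrict (Set.Icc (1:ℝ) (1 + τ)))
                (fun t => φ (ρ₀ (T (-t) x)))
        _ ≤ (1 / τ) * (τ * M) := by
            apply mul_le_mul_of_nonneg_left _ (by positivity)
            rw [← h2]; exact hb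
        _ = M := by field_simp
    calc (∫ x, φ ((1 / τ) * ∫ t in Set.Icc (1:ℝ) (1 + τ), ρ₀ (T (-t) x)) ∂μ)
        ≤ ∫ x, ((1 / τ) * ∫ t in Set.Icc (1:ℝ) (1 + τ), φ (ρ₀ (T (-t) x))) ∂μ :=
          integral_mono hintL hintR (jensen τ hτ)
      _ = ∫ x, φ (ρ₀ x) ∂μ := fubini τ hτ
  -- dominated convergence
  have hDCT : Tendsto
      (fun τ : ℝ => ∫ x, φ ((1 / τ) * ∫ t in Set.Icc (1:ℝ) (1 + τ), ρ₀ (T (-t) x)) ∂μ)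
      atTop (nhds (∫ x, φ (ρbar x) ∂μ)) := by
    refine tendsto_integral_filter_of_dominated_convergence (fun _ => M) ?_ ?_
      (integrable_const M) ?_
    · filter_upwards with τ
      exact ((hφcont.measurable.comp ((havgmeas τ).const_mul (1 / τ)))).aestronglyMeasurable
    · filter_upwards [eventually_gt_atTop (0:ℝ)] with τ hτ
      filter_upwards with x
      exact hM _ (havg_mem τ hτ x)
    · filter_upwards [hconv] with x hx
      exact (hφcont.tendsto (ρbar x)).comp hx
  have hfinal : (∫ x, φ (ρbar x) ∂μ) ≤ ∫ x, φ (ρ₀ x) ∂μ := by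
    refine le_of_tendsto hDCT ?_
    filter_upwards [eventually_gt_atTop (0:ℝ)] with τ hτ
    exact hineq τ hτ
  simpa [φ] using neg_le_neg hfinal
end

section
/- Fix a finite set Λ of lattice sites, a distinguished site x₀ ∈ Λ, and a symmetric coupling J : Λ → Λ → ℝ with J x x = 0 for all x. Let H = (1/2)·∑_{x∈Λ} ∑_{y∈Λ} J x y · σₓ³ σ_y³ be the generalized Ising (gIm) Hamiltonian and P = ∑_{y∈Λ} J x₀ y · σ_y³. Then for every t ∈ ℝ (exact solution of the gIm dynamics): exp(itH) · σ_{x₀}¹ · exp(−itH) = σ_{x₀}¹ · cos(2tP) − σ_{x₀}² · sin(2tP), where for a complex square matrix M one sets cos(M) = (exp(iM) + exp(−iM))/2 and sin(M) = (exp(iM) − exp(−iM))/(2i), with exp the matrix exponential. -/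
open Matrix Complex

noncomputable section

/-- The three Pauli matrices `σ¹, σ², σ³` (indexed by `Fin 3` as `0, 1, 2`). -/
def pauli : Fin 3 → Matrix (Fin 2) (Fin 2) ℂ :=
  ![!![0, 1; 1, 0], !![0, -I; I, 0], !![1, 0; 0, -1]]

/-- The Pauli operator `σₓᵏ` acting at the site `x` of the finite lattice `Λ`, as a matrix
indexed by spin configurations `Λ → Fin 2`. -/
def pauliAt {Λ : Type*} [Fintype Λ] [DecidableEq Λ] (x : Λ) (k : Fin 3) :
    Matrix (Λ → Fin 2) (Λ → Fin 2) ℂ :=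
  fun f g => if ∀ y, y ≠ x → f y = g y then pauli k (f x) (g x) else 0

/-- Cosine of a complex square matrix: `cos M = (exp(iM) + exp(-iM))/2`. -/
def mcos {n : Type*} [Fintype n] [DecidableEq n] (M : Matrix n n ℂ) : Matrix n n ℂ :=
  (2 : ℂ)⁻¹ • (NormedSpace.exp (I • M) + NormedSpace.exp ((-I) • M))

/-- Sine of a complex square matrix: `sin M = (exp(iM) - exp(-iM))/(2i)`. -/
def msin {n : Type*} [Fintype n] [DecidableEq n] (M : Matrix n n ℂ) : Matrix n n ℂ :=
  (2 * I)⁻¹ • (NormedSpace.exp (I • M) - NormedSpace.exp ((-I) • M))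

/-- The generalized Ising model Hamiltonian `H = (1/2) ∑_{x,y ∈ Λ} J x y · σₓ³ σ_y³`. -/
def gImHamiltonian {Λ : Type*} [Fintype Λ] [DecidableEq Λ] (J : Λ → Λ → ℝ) :
    Matrix (Λ → Fin 2) (Λ → Fin 2) ℂ :=
  (2 : ℂ)⁻¹ • ∑ x : Λ, ∑ y : Λ, (J x y : ℂ) • (pauliAt x 2 * pauliAt y 2)

/-- The diagonal value of `σ³`. -/
def zc (j : Fin 2) : ℂ := if j = 0 then 1 else -1

lemma pauli_two_apply (j k : Fin 2) :
    pauli 2 j k = if j = k then zc j else 0 := by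
  fin_cases j <;> fin_cases k <;> simp [pauli, zc]

lemma zc_ne {a b : Fin 2} (h : a ≠ b) : zc a = -zc b := by
  fin_cases a <;> fin_cases b <;> simp_all [zc]

lemma pauliAt_two_eq_diagonal {Λ : Type*} [Fintype Λ] [DecidableEq Λ] (x : Λ) :
    pauliAt x 2 = Matrix.diagonal (fun f : Λ → Fin 2 => zc (f x)) := by
  ext f g
  simp only [pauliAt, Matrix.diagonal_apply, pauli_two_apply]
  by_cases h : f = g
  · subst h; simp
  · simp only [if_neg h]
    by_cases h2 : ∀ y, y ≠ x → f y = g y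
    · rw [if_pos h2, if_neg]
      intro hx
      refine h (funext fun y => ?_)
      by_cases hy : y = x
      · rw [hy]; exact hx
      · exact h2 y hy
    · rw [if_neg h2]

lemma exp_diagonal' {n : Type*} [Fintype n] [DecidableEq n] (v : n → ℂ) :
    NormedSpace.exp (Matrix.diagonal v)
      = Matrix.diagonal (fun i => Complex.exp (v i)) := by
  rw [Matrix.exp_diagonal, Pi.exp_def]
  simp [← Complex.exp_eq_exp_ℂ]

lemma cos_scalar (w : ℂ) :
    (2 : ℂ)⁻¹ * (Complex.exp (I * w) + Complex.exp (-I * w)) = Complex.cos w := by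
  rw [Complex.cos, mul_comm I w, show -I * w = -(w * I) by ring]
  ring

lemma sin_scalar (w : ℂ) :
    (2 * I)⁻¹ * (Complex.exp (I * w) - Complex.exp (-I * w)) = Complex.sin w := by
  rw [Complex.sin, mul_comm I w, show -I * w = -(w * I) by ring]
  rw [mul_inv, inv_I]
  field_simp
  ring

lemma mcos_diagonal {n : Type*} [Fintype n] [DecidableEq n] (v : n → ℂ) :
    mcos (Matrix.diagonal v) = Matrix.diagonal (fun i => Complex.cos (v i)) := by
  unfold mcos
  simp only [← Matrix.diagonal_smul, exp_diagonal']
  ext i j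
  by_cases h : i = j
  · subst h
    simp [Matrix.diagonal_apply, ← cos_scalar (v i)]
  · simp [Matrix.diagonal_apply, h]

lemma msin_diagonal {n : Type*} [Fintype n] [DecidableEq n] (v : n → ℂ) :
    msin (Matrix.diagonal v) = Matrix.diagonal (fun i => Complex.sin (v i)) := by
  unfold msin
  simp only [← Matrix.diagonal_smul, exp_diagonal']
  ext i j
  by_cases h : i = j
  · subst h
    simp [Matrix.diagonal_apply, ← sin_scalar (v i)]
  · simp [Matrix.diagonal_apply, h]

/-- **Exact solution of the gIm dynamics** (Radin; eq. (3.3.4)): with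
`P = ∑_{y ∈ Λ} J x₀ y · σ_y³`, one has
`exp(itH) σ_{x₀}¹ exp(-itH) = σ_{x₀}¹ cos(2tP) - σ_{x₀}² sin(2tP)`. -/
theorem gIm_exact_solution
    {Λ : Type*} [Fintype Λ] [DecidableEq Λ] (x₀ : Λ)
    (J : Λ → Λ → ℝ) (hJsymm : ∀ x y, J x y = J y x) (hJdiag : ∀ x, J x x = 0)
    (t : ℝ) :
    NormedSpace.exp ((I * t) • gImHamiltonian J) * pauliAt x₀ 0 *
        NormedSpace.exp ((-(I * t)) • gImHamiltonian J)
      = pauliAt x₀ 0 * mcos (((2 * t : ℝ) : ℂ) • ∑ y : Λ, (J x₀ y : ℂ) • pauliAt y 2)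
        - pauliAt x₀ 1 * msin (((2 * t : ℝ) : ℂ) • ∑ y : Λ, (J x₀ y : ℂ) • pauliAt y 2) := by
  classical
  set h : (Λ → Fin 2) → ℂ :=
    fun f => (2:ℂ)⁻¹ * ∑ x : Λ, ∑ y : Λ, (J x y : ℂ) * (zc (f x) * zc (f y)) with hh
  set p : (Λ → Fin 2) → ℂ := fun f => ∑ y : Λ, (J x₀ y : ℂ) * zc (f y) with hp
  have hH : gImHamiltonian J = Matrix.diagonal h := by
    unfold gImHamiltonian
    ext f g
    simp [pauliAt_two_eq_diagonal, Matrix.diagonal_mul_diagonal, Matrix.sum_apply,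
      Matrix.diagonal_apply, hh, Finset.mul_sum]
  have hP : (∑ y : Λ, (J x₀ y : ℂ) • pauliAt y 2) = Matrix.diagonal p := by
    ext f g
    simp [pauliAt_two_eq_diagonal, Matrix.sum_apply, Matrix.diagonal_apply, hp]
  -- key energy-difference identity
  have key : ∀ f g : Λ → Fin 2, (∀ y, y ≠ x₀ → f y = g y) → f x₀ ≠ g x₀ →
      h f = h g + (-2) * zc (g x₀) * p g := by
    intro f g hfg hx
    have ha : ∀ y, zc (f y) = (if y = x₀ then (-1 : ℂ) else 1) * zc (g y) := by
      intro y
      by_cases hy : y = x₀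
      · subst hy
        simp only [eq_self_iff_true, if_true, neg_one_mul]
        exact zc_ne hx
      · simp [hy, hfg y hy]
    have term : ∀ x y : Λ,
        (J x y : ℂ) * (zc (f x) * zc (f y))
          = (J x y : ℂ) * (zc (g x) * zc (g y))
            + ((if x = x₀ then (-2 : ℂ) * (J x y) * (zc (g x) * zc (g y)) else 0)
              + (if y = x₀ then (-2 : ℂ) * (J x y) * (zc (g x) * zc (g y)) else 0)) := by
      intro x y
      rw [ha x, ha y]
      by_cases hx' : x = x₀ <;> by_cases hy' : y = x₀
      · subst hx'; subst hy'
        simp [hJdiag]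
      · simp only [if_pos hx', if_neg hy']; ring
      · simp only [if_neg hx', if_pos hy']; ring
      · simp only [if_neg hx', if_neg hy']; ring
    have sum1 : (∑ x : Λ, ∑ y : Λ,
        (if x = x₀ then (-2 : ℂ) * (J x y) * (zc (g x) * zc (g y)) else 0))
        = -2 * zc (g x₀) * p g := by
      rw [Finset.sum_eq_single x₀]
      · simp only [eq_self_iff_true, if_true, hp, Finset.mul_sum]
        exact Finset.sum_congr rfl fun y _ => by ring
      · intro b _ hb
        simp [hb]
      · intro hb; exact absurd (Finset.mem_univ x₀) hb
    have sum2 : (∑ x : Λ, ∑ y : Λ,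
        (if y = x₀ then (-2 : ℂ) * (J x y) * (zc (g x) * zc (g y)) else 0))
        = -2 * zc (g x₀) * p g := by
      have hrow : ∀ x : Λ, (∑ y : Λ,
          (if y = x₀ then (-2 : ℂ) * (J x y) * (zc (g x) * zc (g y)) else 0))
          = (-2 : ℂ) * (J x x₀) * (zc (g x) * zc (g x₀)) := by
        intro x
        rw [Finset.sum_eq_single x₀]
        · simp
        · intro b _ hb; simp [hb]
        · intro hb; exact absurd (Finset.mem_univ x₀) hb
      rw [Finset.sum_congr rfl fun x _ => hrow x]
      simp only [hp, Finset.mul_sum]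
      refine Finset.sum_congr rfl fun x _ => ?_
      rw [hJsymm x x₀]
      ring
    simp only [hh]
    rw [Finset.sum_congr rfl fun x _ => Finset.sum_congr rfl fun y _ => term x y]
    simp only [Finset.sum_add_distrib]
    rw [sum1, sum2]
    ring
  -- rewrite everything in diagonal form
  rw [hH, hP]
  simp only [← Matrix.diagonal_smul]
  rw [mcos_diagonal, msin_diagonal, exp_diagonal', exp_diagonal']
  ext f g
  simp only [Matrix.sub_apply, Matrix.mul_diagonal, Matrix.diagonal_mul, Pi.smul_apply,
    smul_eq_mul]
  by_cases hfg : ∀ y, y ≠ x₀ → f y = g y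
  · by_cases hx : f x₀ = g x₀
    · simp only [pauliAt, if_pos hfg, hx]
      have h2 : g x₀ = 0 ∨ g x₀ = 1 := by omega
      rcases h2 with h2 | h2 <;> rw [h2] <;> simp [pauli]
    · have hk := key f g hfg hx
      have h1 : f x₀ = 0 ∨ f x₀ = 1 := by omega
      have h2 : g x₀ = 0 ∨ g x₀ = 1 := by omega
      simp only [pauliAt, if_pos hfg]
      rcases h1 with h1 | h1 <;> rcases h2 with h2 | h2
      · exact absurd (h1.trans h2.symm) hx
      · -- f x₀ = 0, g x₀ = 1 : zc (g x₀) = -1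
        rw [h1, h2]
        rw [h2] at hk
        simp only [zc, if_neg (by decide : ¬(1 : Fin 2) = 0)] at hk
        have e0 : pauli 0 0 1 = 1 := by simp [pauli]
        have e1 : pauli 1 0 1 = -I := by simp [pauli]
        rw [e0, e1, mul_one, mul_comm (Complex.exp (I * ↑t * h f)),
          ← Complex.exp_add,
          show (-(I * ↑t) * h g + I * ↑t * h f) = ((2 * t : ℝ) : ℂ) * p g * I by
            rw [hk]; push_cast; ring,
          Complex.exp_mul_I]
        ring
      · -- f x₀ = 1, g x₀ = 0 : zc (g x₀) = 1
        rw [h1, h2]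
        rw [h2] at hk
        simp only [zc, if_pos rfl] at hk
        have e0 : pauli 0 1 0 = 1 := by simp [pauli]
        have e1 : pauli 1 1 0 = I := by simp [pauli]
        rw [e0, e1, mul_one, mul_comm (Complex.exp (I * ↑t * h f)),
          ← Complex.exp_add,
          show (-(I * ↑t) * h g + I * ↑t * h f) = (-(((2 * t : ℝ) : ℂ) * p g)) * I by
            rw [hk]; push_cast; ring,
          Complex.exp_mul_I, Complex.cos_neg, Complex.sin_neg]
        ring
      · exact absurd (h1.trans h2.symm) hx
  · simp [pauliAt, if_neg hfg]
end
end

section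
/- (Radin's lemma for the Dyson model D_α) Let α > 1. There exists a constant c > 0 such that for every real t with |t| ≥ 1, lim_{N→∞} ∏_{n=1}^N cos²(2t/n^α) ≤ exp(−c·|t|^{1/α}). (The limit exists because each factor lies in [0,1], so the partial products are nonincreasing and nonnegative.) -/
open Filter Real

/-- **Radin's lemma for the Dyson model `D_α`.** For `α > 1` there is a constant `c > 0`
such that for all `|t| ≥ 1` the (existing, since each factor lies in `[0,1]`) limit of the
partial products `∏_{n=1}^N cos²(2t/nᵅ)` is at most `exp(-c |t|^{1/α})`. -/
theorem radin_dyson_decay (α : ℝ) (hα : 1 < α) :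
    ∃ c : ℝ, 0 < c ∧ ∀ t : ℝ, 1 ≤ |t| →
      ∃ L : ℝ,
        Tendsto (fun N : ℕ => ∏ n ∈ Finset.Icc 1 N, (Real.cos (2 * t / (n : ℝ) ^ α)) ^ 2)
          atTop (nhds L) ∧
        L ≤ Real.exp (-c * |t| ^ (1 / α)) := by
  have hα0 : (0:ℝ) < α := lt_trans one_pos hα
  set lo : ℝ := 2 / (4:ℝ) ^ α with hlo_def
  have h4 : (0:ℝ) < (4:ℝ) ^ α := Real.rpow_pos_of_pos (by norm_num) α
  have h4ge : (4:ℝ) ≤ (4:ℝ) ^ α := by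
    calc (4:ℝ) = (4:ℝ) ^ (1:ℝ) := (Real.rpow_one 4).symm
      _ ≤ (4:ℝ) ^ α := Real.rpow_le_rpow_of_exponent_le (by norm_num) hα.le
  have h2ge : (2:ℝ) < (2:ℝ) ^ α := by
    calc (2:ℝ) = (2:ℝ) ^ (1:ℝ) := (Real.rpow_one 2).symm
      _ < (2:ℝ) ^ α := Real.rpow_lt_rpow_of_exponent_lt (by norm_num) hα
  have h2pos : (0:ℝ) < (2:ℝ) ^ α := Real.rpow_pos_of_pos (by norm_num) α
  have hlo_pos : 0 < lo := by positivity
  have hlo_lt : lo < 1 := by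
    rw [hlo_def, div_lt_one h4]; linarith
  have hpi : (1:ℝ) < π / 2 := by linarith [Real.pi_gt_three]
  have hsin_pos : 0 < Real.sin lo :=
    Real.sin_pos_of_pos_of_lt_pi hlo_pos (by linarith [Real.pi_gt_three])
  set c : ℝ := (Real.sin lo) ^ 2 with hc_def
  refine ⟨c, by positivity, ?_⟩
  intro t ht
  set g : ℕ → ℝ := fun n => (Real.cos (2 * t / (n : ℝ) ^ α)) ^ 2 with hg_def
  have hg0 : ∀ n, 0 ≤ g n := fun n => sq_nonneg _
  have hg1 : ∀ n, g n ≤ 1 := by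
    intro n
    have h1 := Real.cos_le_one (2 * t / (n : ℝ) ^ α)
    have h2 := Real.neg_one_le_cos (2 * t / (n : ℝ) ^ α)
    show (Real.cos (2 * t / (n : ℝ) ^ α)) ^ 2 ≤ 1
    nlinarith
  set P : ℕ → ℝ := fun N => ∏ n ∈ Finset.Icc 1 N, g n with hP_def
  have hP0 : ∀ N, 0 ≤ P N := fun N => Finset.prod_nonneg fun n _ => hg0 n
  have hanti : Antitone P := by
    apply antitone_nat_of_succ_le
    intro N
    have : P (N + 1) = P N * g (N + 1) := by
      rw [hP_def]
      exact Finset.prod_Icc_succ_top (Nat.succ_le_succ (Nat.zero_le N)) g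
    rw [this]
    exact mul_le_of_le_one_right (hP0 N) (hg1 (N + 1))
  have hbdd : BddBelow (Set.range P) := ⟨0, by rintro x ⟨N, rfl⟩; exact hP0 N⟩
  refine ⟨⨅ N, P N, tendsto_atTop_ciInf hanti hbdd, ?_⟩
  -- the analytic bound
  have ht0 : (0:ℝ) < |t| := by linarith
  set T : ℝ := |t| ^ (1 / α) with hT_def
  have hT0 : (0:ℝ) < T := Real.rpow_pos_of_pos ht0 _
  have hT1 : 1 ≤ T := Real.one_le_rpow ht (by positivity)
  have hTalpha : T ^ α = |t| := by
    rw [hT_def, ← Real.rpow_mul (abs_nonneg t), one_div, inv_mul_cancel₀ hα0.ne',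
      Real.rpow_one]
  set a : ℕ := ⌈2 * T⌉₊ with ha_def
  set k : ℕ := ⌊T⌋₊ with hk_def
  have ha_lb : 2 * T ≤ (a : ℝ) := Nat.le_ceil _
  have ha_ub : (a : ℝ) < 2 * T + 1 := Nat.ceil_lt_add_one (by positivity)
  have hk_ub : (k : ℝ) ≤ T := Nat.floor_le hT0.le
  have hk_lb : T < (k : ℝ) + 1 := Nat.lt_floor_add_one T
  have ha1 : 1 ≤ a := by
    by_contra h
    push_neg at h
    interval_cases a
    simp only [Nat.cast_zero] at ha_lb
    linarith
  set S : Finset ℕ := Finset.Icc a (a + k) with hS_def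
  have hsub : S ⊆ Finset.Icc 1 (a + k) :=
    Finset.Icc_subset_Icc ha1 le_rfl
  -- each factor on S is at most exp(-c)
  have hfactor : ∀ n ∈ S, g n ≤ Real.exp (-c) := by
    intro n hn
    rw [hS_def, Finset.mem_Icc] at hn
    have hn_lb : 2 * T ≤ (n : ℝ) := le_trans ha_lb (by exact_mod_cast hn.1)
    have hn_ub : (n : ℝ) ≤ 4 * T := by
      have : (n : ℝ) ≤ (a : ℝ) + (k : ℝ) := by exact_mod_cast hn.2
      linarith
    have hn_pos : (0:ℝ) < (n : ℝ) := by linarith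
    have hpow_lb : (2:ℝ) ^ α * |t| ≤ (n : ℝ) ^ α := by
      calc (2:ℝ) ^ α * |t| = (2 * T) ^ α := by
            rw [Real.mul_rpow (by norm_num) hT0.le, hTalpha]
        _ ≤ (n : ℝ) ^ α := Real.rpow_le_rpow (by positivity) hn_lb hα0.le
    have hpow_ub : (n : ℝ) ^ α ≤ (4:ℝ) ^ α * |t| := by
      calc (n : ℝ) ^ α ≤ (4 * T) ^ α := Real.rpow_le_rpow hn_pos.le hn_ub hα0.le
        _ = (4:ℝ) ^ α * |t| := by rw [Real.mul_rpow (by norm_num) hT0.le, hTalpha]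
    have hpow_pos : (0:ℝ) < (n : ℝ) ^ α := Real.rpow_pos_of_pos hn_pos α
    set x : ℝ := 2 * t / (n : ℝ) ^ α with hx_def
    have habs : |x| = 2 * |t| / (n : ℝ) ^ α := by
      rw [hx_def, abs_div, abs_mul, abs_of_pos hpow_pos]
      norm_num
    have hx_lb : lo ≤ |x| := by
      rw [habs, hlo_def, div_le_div_iff₀ h4 hpow_pos]
      nlinarith
    have hx_ub : |x| ≤ π / 2 := by
      rw [habs]
      have h1 : 2 * |t| / (n : ℝ) ^ α ≤ 2 * |t| / ((2:ℝ) ^ α * |t|) := by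
        apply div_le_div_of_nonneg_left (by positivity) (by positivity) hpow_lb
      have h2 : 2 * |t| / ((2:ℝ) ^ α * |t|) = 2 / (2:ℝ) ^ α := by
        field_simp
      have h3 : (2:ℝ) / (2:ℝ) ^ α < 1 := by
        rw [div_lt_one h2pos]; linarith
      linarith
    have hsin_le : Real.sin lo ≤ Real.sin |x| := by
      apply Real.strictMonoOn_sin.monotoneOn
      · constructor
        · linarith [hlo_pos, Real.pi_pos]
        · linarith
      · constructor
        · linarith [abs_nonneg x, Real.pi_pos]
        · exact hx_ub
      · exact hx_lb
    have hsin_sq : (Real.sin |x|) ^ 2 = (Real.sin x) ^ 2 := by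
      rcases abs_cases x with ⟨h, _⟩ | ⟨h, _⟩ <;> rw [h] <;> simp [Real.sin_neg]
    have hc_le : c ≤ (Real.sin x) ^ 2 := by
      rw [← hsin_sq, hc_def]
      exact pow_le_pow_left₀ hsin_pos.le hsin_le 2
    have hcos : g n = 1 - (Real.sin x) ^ 2 := Real.cos_sq' x
    have hexp : 1 - c ≤ Real.exp (-c) := by
      linarith [Real.add_one_le_exp (-c)]
    rw [hcos]; linarith
  -- product bound
  have hScard : S.card = k + 1 := by
    rw [hS_def, Nat.card_Icc]; omega
  have hprod_S : ∏ n ∈ S, g n ≤ Real.exp (-c * T) := by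
    calc ∏ n ∈ S, g n ≤ ∏ _n ∈ S, Real.exp (-c) :=
          Finset.prod_le_prod (fun n _ => hg0 n) hfactor
      _ = Real.exp (-c) ^ S.card := Finset.prod_const _
      _ = Real.exp ((S.card : ℝ) * (-c)) := (Real.exp_nat_mul (-c) S.card).symm
      _ ≤ Real.exp (-c * T) := by
          apply Real.exp_le_exp.mpr
          rw [hScard]
          push_cast
          have hc0 : (0:ℝ) < c := by positivity
          nlinarith
  have hPN : P (a + k) ≤ Real.exp (-c * T) := by
    have hsplit : (∏ n ∈ Finset.Icc 1 (a + k) \ S, g n) * ∏ n ∈ S, g n = P (a + k) :=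
      Finset.prod_sdiff hsub
    have h1 : (∏ n ∈ Finset.Icc 1 (a + k) \ S, g n) ≤ 1 :=
      Finset.prod_le_one (fun n _ => hg0 n) (fun n _ => hg1 n)
    have h2 : (0:ℝ) ≤ ∏ n ∈ S, g n := Finset.prod_nonneg fun n _ => hg0 n
    calc P (a + k) = (∏ n ∈ Finset.Icc 1 (a + k) \ S, g n) * ∏ n ∈ S, g n := hsplit.symm
      _ ≤ 1 * ∏ n ∈ S, g n := mul_le_mul_of_nonneg_right h1 h2
      _ = ∏ n ∈ S, g n := one_mul _
      _ ≤ Real.exp (-c * T) := hprod_S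
  calc (⨅ N, P N) ≤ P (a + k) := ciInf_le hbdd (a + k)
    _ ≤ Real.exp (-c * T) := hPN
    _ = Real.exp (-c * |t| ^ (1 / α)) := by rw [hT_def]
end

section
/- (Subadditivity of the von Neumann entropy, eq. (3.6.8)) Let I₁ and I₂ be nonempty finite types and let ρ be a density matrix indexed by I₁ × I₂. Let ρ₁ and ρ₂ be the reduced density matrices: ρ₁(i,j) = ∑_{k∈I₂} ρ((i,k),(j,k)) and ρ₂(i,j) = ∑_{k∈I₁} ρ((k,i),(k,j)). Then S(ρ) ≤ S(ρ₁) + S(ρ₂). -/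
open Matrix Complex Finset
open scoped ComplexOrder

noncomputable section

/-- The von Neumann entropy `S(ρ) = -∑_k λ_k log λ_k` of a (Hermitian) matrix, where the
`λ_k` are its eigenvalues with multiplicity (and `0 · log 0 = 0`, Boltzmann constant `1`). -/
def vnEntropy {n : Type*} [Fintype n] [DecidableEq n] (ρ : Matrix n n ℂ) : ℝ :=
  if h : ρ.IsHermitian then -∑ i, h.eigenvalues i * Real.log (h.eigenvalues i) else 0




/-- Gibbs' inequality. -/
lemma my_gibbs {ι : Type*} [Fintype ι] (p q : ι → ℝ) (hp : ∀ i, 0 ≤ p i) (hq : ∀ i, 0 ≤ q i)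
    (hpq : ∀ i, q i = 0 → p i = 0) (hsum : ∑ i, q i ≤ ∑ i, p i) :
    ∑ i, p i * Real.log (q i) ≤ ∑ i, p i * Real.log (p i) := by
  have key : ∀ i, p i * Real.log (q i) - p i * Real.log (p i) ≤ q i - p i := by
    intro i
    rcases eq_or_lt_of_le (hp i) with h0 | h0
    · simp only [← h0, zero_mul, sub_zero, sub_self, zero_sub, neg_zero]
      exact hq i
    · have hq0 : 0 < q i := by
        rcases eq_or_lt_of_le (hq i) with h | h
        · exact absurd (hpq i h.symm) h0.ne'
        · exact h
      have := Real.log_le_sub_one_of_pos (div_pos hq0 h0)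
      rw [Real.log_div hq0.ne' h0.ne'] at this
      have h2 : p i * (Real.log (q i) - Real.log (p i)) ≤ p i * (q i / p i - 1) :=
        mul_le_mul_of_nonneg_left this (hp i)
      rw [mul_sub, mul_sub, mul_div_cancel₀ _ h0.ne'] at h2
      linarith
  have h1 := Finset.sum_le_sum (fun i (_ : i ∈ univ) => key i)
  rw [Finset.sum_sub_distrib, Finset.sum_sub_distrib] at h1
  linarith

/-- Entropy increases under doubly stochastic maps (Jensen). -/
lemma my_jensen {ι κ : Type*} [Fintype ι] [Fintype κ] (B : κ → ι → ℝ) (p : ι → ℝ)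
    (hB0 : ∀ j i, 0 ≤ B j i) (hrow : ∀ j, ∑ i, B j i = 1) (hcol : ∀ i, ∑ j, B j i = 1)
    (hp : ∀ i, 0 ≤ p i) :
    ∑ j, (∑ i, B j i * p i) * Real.log (∑ i, B j i * p i)
      ≤ ∑ i, p i * Real.log (p i) := by
  have step : ∀ j, (∑ i, B j i * p i) * Real.log (∑ i, B j i * p i)
      ≤ ∑ i, B j i * (p i * Real.log (p i)) := by
    intro j
    have := Real.convexOn_mul_log.map_sum_le (t := univ) (w := B j) (p := p)
      (fun i _ => hB0 j i) (hrow j) (fun i _ => hp i)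
    simpa [smul_eq_mul] using this
  calc ∑ j, (∑ i, B j i * p i) * Real.log (∑ i, B j i * p i)
      ≤ ∑ j, ∑ i, B j i * (p i * Real.log (p i)) := Finset.sum_le_sum fun j _ => step j
    _ = ∑ i, (∑ j, B j i) * (p i * Real.log (p i)) := by
        rw [Finset.sum_comm]
        exact Finset.sum_congr rfl fun i _ => by rw [← Finset.sum_mul]
    _ = ∑ i, p i * Real.log (p i) := by simp [hcol]

/-- Classical subadditivity of Shannon entropy. -/
lemma my_classical_subadd {I₁ I₂ : Type*} [Fintype I₁] [Fintype I₂] (d : I₁ × I₂ → ℝ)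
    (hd : ∀ x, 0 ≤ d x) (hsum : ∑ x, d x = 1) :
    -∑ x, d x * Real.log (d x)
      ≤ -∑ i, (∑ j, d (i, j)) * Real.log (∑ j, d (i, j))
        + -∑ j, (∑ i, d (i, j)) * Real.log (∑ i, d (i, j)) := by
  set a : I₁ → ℝ := fun i => ∑ j, d (i, j) with ha
  set b : I₂ → ℝ := fun j => ∑ i, d (i, j) with hb
  have ha0 : ∀ i, 0 ≤ a i := fun i => Finset.sum_nonneg fun j _ => hd _
  have hb0 : ∀ j, 0 ≤ b j := fun j => Finset.sum_nonneg fun i _ => hd _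
  have hda : ∀ x : I₁ × I₂, d x ≤ a x.1 := fun x => by
    simpa using Finset.single_le_sum (f := fun j => d (x.1, j)) (fun j _ => hd _) (mem_univ x.2)
  have hdb : ∀ x : I₁ × I₂, d x ≤ b x.2 := fun x => by
    simpa using Finset.single_le_sum (f := fun i => d (i, x.2)) (fun i _ => hd _) (mem_univ x.1)
  have hsa : ∑ i, a i = 1 := by rw [← hsum, Fintype.sum_prod_type]
  have hsb : ∑ j, b j = 1 := by rw [← hsum, Fintype.sum_prod_type_right]
  have hgibbs := my_gibbs d (fun x => a x.1 * b x.2) hd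
      (fun x => mul_nonneg (ha0 _) (hb0 _))
      (fun x hx => by
        rcases mul_eq_zero.mp hx with h | h
        · exact le_antisymm (h ▸ hda x) (hd x)
        · exact le_antisymm (h ▸ hdb x) (hd x))
      (by rw [hsum, Fintype.sum_prod_type]
          simp only [← Finset.sum_mul, ← Finset.mul_sum]
          rw [hsa, hsb, one_mul])
  have hsplit : ∑ x : I₁ × I₂, d x * Real.log (a x.1 * b x.2)
      = ∑ x : I₁ × I₂, (d x * Real.log (a x.1) + d x * Real.log (b x.2)) := by
    refine Finset.sum_congr rfl fun x _ => ?_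
    rcases eq_or_lt_of_le (hd x) with h0 | h0
    · simp [← h0]
    · have hax : a x.1 ≠ 0 := (lt_of_lt_of_le h0 (hda x)).ne'
      have hbx : b x.2 ≠ 0 := (lt_of_lt_of_le h0 (hdb x)).ne'
      rw [Real.log_mul hax hbx, mul_add]
  have h1 : ∑ x : I₁ × I₂, d x * Real.log (a x.1) = ∑ i, a i * Real.log (a i) := by
    rw [Fintype.sum_prod_type]
    exact Finset.sum_congr rfl fun i _ => by simp only [Prod.fst]; rw [← Finset.sum_mul]
  have h2 : ∑ x : I₁ × I₂, d x * Real.log (b x.2) = ∑ j, b j * Real.log (b j) := by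
    rw [Fintype.sum_prod_type_right]
    exact Finset.sum_congr rfl fun j _ => by simp only [Prod.snd]; rw [← Finset.sum_mul]
  rw [hsplit, Finset.sum_add_distrib, h1, h2] at hgibbs
  linarith


lemma my_marg {I₁ I₂ : Type*} [Fintype I₁] [Fintype I₂] [DecidableEq I₁] [DecidableEq I₂]
    (ρ : Matrix (I₁ × I₂) (I₁ × I₂) ℂ) (U₁ : Matrix I₁ I₁ ℂ) (U₂ : Matrix I₂ I₂ ℂ)
    (hU₂ : U₂ * U₂ᴴ = 1) (i : I₁) :
    ∑ j : I₂, ((Matrix.of fun x y : I₁ × I₂ => U₁ x.1 y.1 * U₂ x.2 y.2)ᴴ * ρ *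
        (Matrix.of fun x y : I₁ × I₂ => U₁ x.1 y.1 * U₂ x.2 y.2)) (i, j) (i, j)
      = (U₁ᴴ * (Matrix.of fun a c : I₁ => ∑ b : I₂, ρ (a, b) (c, b)) * U₁) i i := by
  have hcollapse : ∀ b e : I₂, ∑ j, star (U₂ b j) * U₂ e j = if b = e then 1 else 0 := by
    intro b e
    have h := congrArg (fun M : Matrix I₂ I₂ ℂ => M b e) hU₂
    simp only [mul_apply, conjTranspose_apply, one_apply] at h
    calc ∑ j, star (U₂ b j) * U₂ e j = star (∑ j, U₂ b j * star (U₂ e j)) := by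
          simp [star_sum, mul_comm]
      _ = star (if b = e then (1:ℂ) else 0) := by rw [h]
      _ = if b = e then 1 else 0 := by split <;> simp
  calc ∑ j : I₂, ((Matrix.of fun x y : I₁ × I₂ => U₁ x.1 y.1 * U₂ x.2 y.2)ᴴ * ρ *
        (Matrix.of fun x y : I₁ × I₂ => U₁ x.1 y.1 * U₂ x.2 y.2)) (i, j) (i, j)
      = ∑ j : I₂, ∑ w : I₁ × I₂, ∑ z : I₁ × I₂,
          (star (U₁ z.1 i) * star (U₂ z.2 j)) * ρ z w * (U₁ w.1 i * U₂ w.2 j) := by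
        simp only [mul_apply, conjTranspose_apply, of_apply, star_mul', Finset.sum_mul]
    _ = ∑ w : I₁ × I₂, ∑ z : I₁ × I₂,
          (∑ j, star (U₂ z.2 j) * U₂ w.2 j) * (star (U₁ z.1 i) * ρ z w * U₁ w.1 i) := by
        rw [Finset.sum_comm]
        refine Finset.sum_congr rfl fun w _ => ?_
        rw [Finset.sum_comm]
        refine Finset.sum_congr rfl fun z _ => ?_
        rw [Finset.sum_mul]
        refine Finset.sum_congr rfl fun j _ => ?_
        ring
    _ = ∑ w : I₁ × I₂, ∑ z : I₁ × I₂,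
          (if z.2 = w.2 then (1:ℂ) else 0) * (star (U₁ z.1 i) * ρ z w * U₁ w.1 i) := by
        refine Finset.sum_congr rfl fun w _ => Finset.sum_congr rfl fun z _ => ?_
        rw [hcollapse]
    _ = ∑ w : I₁ × I₂, ∑ z1 : I₁, star (U₁ z1 i) * ρ (z1, w.2) w * U₁ w.1 i := by
        refine Finset.sum_congr rfl fun w _ => ?_
        rw [Fintype.sum_prod_type]
        refine Finset.sum_congr rfl fun z1 _ => ?_
        simp only [ite_mul, one_mul, zero_mul]
        exact Finset.sum_ite_eq' univ w.2 (fun z2 => star (U₁ z1 i) * ρ (z1, z2) w * U₁ w.1 i)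
          |>.trans (by simp)
    _ = (U₁ᴴ * (Matrix.of fun a c : I₁ => ∑ b : I₂, ρ (a, b) (c, b)) * U₁) i i := by
        simp only [mul_apply, conjTranspose_apply, of_apply, Finset.sum_mul, Finset.mul_sum]
        rw [Fintype.sum_prod_type]
        refine Finset.sum_congr rfl fun x _ => ?_
        rw [Finset.sum_comm]


lemma my_marg2 {I₁ I₂ : Type*} [Fintype I₁] [Fintype I₂] [DecidableEq I₁] [DecidableEq I₂]
    (ρ : Matrix (I₁ × I₂) (I₁ × I₂) ℂ) (U₁ : Matrix I₁ I₁ ℂ) (U₂ : Matrix I₂ I₂ ℂ)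
    (hU₁ : U₁ * U₁ᴴ = 1) (j : I₂) :
    ∑ i : I₁, ((Matrix.of fun x y : I₁ × I₂ => U₁ x.1 y.1 * U₂ x.2 y.2)ᴴ * ρ *
        (Matrix.of fun x y : I₁ × I₂ => U₁ x.1 y.1 * U₂ x.2 y.2)) (i, j) (i, j)
      = (U₂ᴴ * (Matrix.of fun a c : I₂ => ∑ b : I₁, ρ (b, a) (b, c)) * U₂) j j := by
  have hcollapse : ∀ b e : I₁, ∑ i, star (U₁ b i) * U₁ e i = if b = e then 1 else 0 := by
    intro b e
    have h := congrArg (fun M : Matrix I₁ I₁ ℂ => M b e) hU₁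
    simp only [mul_apply, conjTranspose_apply, one_apply] at h
    calc ∑ i, star (U₁ b i) * U₁ e i = star (∑ i, U₁ b i * star (U₁ e i)) := by
          simp [star_sum, mul_comm]
      _ = star (if b = e then (1:ℂ) else 0) := by rw [h]
      _ = if b = e then 1 else 0 := by split <;> simp
  calc ∑ i : I₁, ((Matrix.of fun x y : I₁ × I₂ => U₁ x.1 y.1 * U₂ x.2 y.2)ᴴ * ρ *
        (Matrix.of fun x y : I₁ × I₂ => U₁ x.1 y.1 * U₂ x.2 y.2)) (i, j) (i, j)
      = ∑ i : I₁, ∑ w : I₁ × I₂, ∑ z : I₁ × I₂,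
          (star (U₁ z.1 i) * star (U₂ z.2 j)) * ρ z w * (U₁ w.1 i * U₂ w.2 j) := by
        simp only [mul_apply, conjTranspose_apply, of_apply, star_mul', Finset.sum_mul]
    _ = ∑ w : I₁ × I₂, ∑ z : I₁ × I₂,
          (∑ i, star (U₁ z.1 i) * U₁ w.1 i) * (star (U₂ z.2 j) * ρ z w * U₂ w.2 j) := by
        rw [Finset.sum_comm]
        refine Finset.sum_congr rfl fun w _ => ?_
        rw [Finset.sum_comm]
        refine Finset.sum_congr rfl fun z _ => ?_
        rw [Finset.sum_mul]
        refine Finset.sum_congr rfl fun i _ => ?_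
        ring
    _ = ∑ w : I₁ × I₂, ∑ z : I₁ × I₂,
          (if z.1 = w.1 then (1:ℂ) else 0) * (star (U₂ z.2 j) * ρ z w * U₂ w.2 j) := by
        refine Finset.sum_congr rfl fun w _ => Finset.sum_congr rfl fun z _ => ?_
        rw [hcollapse]
    _ = ∑ w : I₁ × I₂, ∑ z2 : I₂, star (U₂ z2 j) * ρ (w.1, z2) w * U₂ w.2 j := by
        refine Finset.sum_congr rfl fun w _ => ?_
        rw [Fintype.sum_prod_type, Finset.sum_comm]
        refine Finset.sum_congr rfl fun z2 _ => ?_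
        simp only [ite_mul, one_mul, zero_mul]
        exact Finset.sum_ite_eq' univ w.1 (fun z1 => star (U₂ z2 j) * ρ (z1, z2) w * U₂ w.2 j)
          |>.trans (by simp)
    _ = (U₂ᴴ * (Matrix.of fun a c : I₂ => ∑ b : I₁, ρ (b, a) (b, c)) * U₂) j j := by
        simp only [mul_apply, conjTranspose_apply, of_apply, Finset.sum_mul, Finset.mul_sum]
        rw [Fintype.sum_prod_type_right]
        refine Finset.sum_congr rfl fun y _ => ?_
        rw [Finset.sum_comm]

/-- **Subadditivity of the von Neumann entropy** (eq. (3.6.8)): for a density matrix `ρ` on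
a product `I₁ × I₂` with reduced density matrices `ρ₁, ρ₂` obtained by partial traces,
`S(ρ) ≤ S(ρ₁) + S(ρ₂)`. -/
theorem vnEntropy_subadditivity
    {I₁ I₂ : Type*} [Fintype I₁] [Fintype I₂] [DecidableEq I₁] [DecidableEq I₂]
    [Nonempty I₁] [Nonempty I₂]
    (ρ : Matrix (I₁ × I₂) (I₁ × I₂) ℂ)
    (hρ : ρ.PosSemidef) (hρtr : ρ.trace = 1) :
    vnEntropy ρ
      ≤ vnEntropy (Matrix.of fun i j : I₁ => ∑ k : I₂, ρ (i, k) (j, k))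
        + vnEntropy (Matrix.of fun i j : I₂ => ∑ k : I₁, ρ (k, i) (k, j)) := by
  have h : ρ.IsHermitian := hρ.1
  have h1 : (Matrix.of fun i j : I₁ => ∑ k : I₂, ρ (i, k) (j, k)).IsHermitian := by
    ext i j
    simp only [conjTranspose_apply, of_apply, star_sum]
    exact Finset.sum_congr rfl fun k _ => h.apply _ _
  have h2 : (Matrix.of fun i j : I₂ => ∑ k : I₁, ρ (k, i) (k, j)).IsHermitian := by
    ext i j
    simp only [conjTranspose_apply, of_apply, star_sum]
    exact Finset.sum_congr rfl fun k _ => h.apply _ _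
  set p : I₁ × I₂ → ℝ := h.eigenvalues with hp
  set a : I₁ → ℝ := h1.eigenvalues with ha
  set b : I₂ → ℝ := h2.eigenvalues with hb
  set U : Matrix (I₁ × I₂) (I₁ × I₂) ℂ := (h.eigenvectorUnitary : Matrix (I₁ × I₂) (I₁ × I₂) ℂ) with hU
  set U₁ : Matrix I₁ I₁ ℂ := (h1.eigenvectorUnitary : Matrix I₁ I₁ ℂ) with hU₁
  set U₂ : Matrix I₂ I₂ ℂ := (h2.eigenvectorUnitary : Matrix I₂ I₂ ℂ) with hU₂
  have hUu : star U * U = 1 := Matrix.mem_unitaryGroup_iff'.mp h.eigenvectorUnitary.2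
  have hUu' : U * star U = 1 := Matrix.mem_unitaryGroup_iff.mp h.eigenvectorUnitary.2
  have hU₁u : star U₁ * U₁ = 1 := Matrix.mem_unitaryGroup_iff'.mp h1.eigenvectorUnitary.2
  have hU₁u' : U₁ * star U₁ = 1 := Matrix.mem_unitaryGroup_iff.mp h1.eigenvectorUnitary.2
  have hU₂u : star U₂ * U₂ = 1 := Matrix.mem_unitaryGroup_iff'.mp h2.eigenvectorUnitary.2
  have hU₂u' : U₂ * star U₂ = 1 := Matrix.mem_unitaryGroup_iff.mp h2.eigenvectorUnitary.2
  set W : Matrix (I₁ × I₂) (I₁ × I₂) ℂ :=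
    Matrix.of fun x y : I₁ × I₂ => U₁ x.1 y.1 * U₂ x.2 y.2 with hWdef
  -- unitarity of W
  have hprod : ∀ (A : Matrix I₁ I₁ ℂ) (B : Matrix I₂ I₂ ℂ),
      (A = 1) → (B = 1) → ∀ x y : I₁ × I₂, A x.1 y.1 * B x.2 y.2 = (1 : Matrix (I₁ × I₂) (I₁ × I₂) ℂ) x y := by
    rintro A B rfl rfl ⟨x1, x2⟩ ⟨y1, y2⟩
    simp [one_apply, Prod.ext_iff, ite_and]
    split <;> simp_all
  have hWu : Wᴴ * W = 1 := by
    ext x y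
    calc (Wᴴ * W) x y = ((star U₁ * U₁) x.1 y.1) * ((star U₂ * U₂) x.2 y.2) := by
          simp only [mul_apply, conjTranspose_apply, Matrix.star_eq_conjTranspose]
          rw [Fintype.sum_prod_type, Finset.sum_mul_sum]
          refine Finset.sum_congr rfl fun z1 _ => Finset.sum_congr rfl fun z2 _ => ?_
          simp only [hWdef, of_apply, star_mul']
          ring
      _ = (1 : Matrix (I₁ × I₂) (I₁ × I₂) ℂ) x y := hprod _ _ hU₁u hU₂u x y
  have hWu' : W * Wᴴ = 1 := by
    ext x y
    calc (W * Wᴴ) x y = ((U₁ * star U₁) x.1 y.1) * ((U₂ * star U₂) x.2 y.2) := by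
          simp only [mul_apply, conjTranspose_apply, Matrix.star_eq_conjTranspose]
          rw [Fintype.sum_prod_type, Finset.sum_mul_sum]
          refine Finset.sum_congr rfl fun z1 _ => Finset.sum_congr rfl fun z2 _ => ?_
          simp only [hWdef, of_apply, star_mul']
          ring
      _ = (1 : Matrix (I₁ × I₂) (I₁ × I₂) ℂ) x y := hprod _ _ hU₁u' hU₂u' x y
  set V : Matrix (I₁ × I₂) (I₁ × I₂) ℂ := Wᴴ * U with hVdef
  have hVH : Vᴴ = star U * W := by
    rw [hVdef, conjTranspose_mul, conjTranspose_conjTranspose, Matrix.star_eq_conjTranspose]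
  have hVu : Vᴴ * V = 1 := by
    rw [hVH, hVdef, Matrix.mul_assoc, ← Matrix.mul_assoc W Wᴴ U, hWu', Matrix.one_mul, hUu]
  have hVu' : V * Vᴴ = 1 := by
    rw [hVdef, hVH, Matrix.mul_assoc, ← Matrix.mul_assoc U (star U) W, hUu', Matrix.one_mul, hWu]
  set B : (I₁ × I₂) → (I₁ × I₂) → ℝ := fun x k => Complex.normSq (V x k) with hB
  set d : (I₁ × I₂) → ℝ := fun x => ∑ k, B x k * p k with hd
  have hB0 : ∀ x k, 0 ≤ B x k := fun x k => Complex.normSq_nonneg _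
  have hp0 : ∀ k, 0 ≤ p k := fun k => hρ.eigenvalues_nonneg k
  have hd0 : ∀ x, 0 ≤ d x := fun x =>
    Finset.sum_nonneg fun k _ => mul_nonneg (hB0 x k) (hp0 k)
  have hrow : ∀ x, ∑ k, B x k = 1 := by
    intro x
    have e := congrArg (fun M : Matrix (I₁ × I₂) (I₁ × I₂) ℂ => M x x) hVu'
    simp only [mul_apply, conjTranspose_apply, one_apply_eq] at e
    have : ((∑ k, B x k : ℝ) : ℂ) = 1 := by
      push_cast
      rw [← e]
      exact Finset.sum_congr rfl fun k _ => (Complex.mul_conj _).symm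
    exact_mod_cast this
  have hcol : ∀ k, ∑ x, B x k = 1 := by
    intro k
    have e := congrArg (fun M : Matrix (I₁ × I₂) (I₁ × I₂) ℂ => M k k) hVu
    simp only [mul_apply, conjTranspose_apply, one_apply_eq] at e
    have : ((∑ x, B x k : ℝ) : ℂ) = 1 := by
      push_cast
      rw [← e]
      exact Finset.sum_congr rfl fun x _ => by
        rw [hB]; simp only [Complex.star_def]
        rw [Complex.normSq_eq_conj_mul_self]
    exact_mod_cast this
  -- diagonal entries of the conjugated matrix
  have hdiag : ∀ x, (Wᴴ * ρ * W) x x = (d x : ℂ) := by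
    intro x
    have hρW : Wᴴ * ρ * W = V * Matrix.diagonal (fun k => (p k : ℂ)) * Vᴴ := by
      conv_lhs => rw [h.spectral_theorem, Unitary.conjStarAlgAut_apply]
      rw [hVH, hVdef]
      simp only [Matrix.mul_assoc]
      rfl
    rw [hρW]
    calc (V * Matrix.diagonal (fun k => (p k : ℂ)) * Vᴴ) x x
        = ∑ k, (V x k * (p k : ℂ)) * star (V x k) := by
          rw [mul_apply]
          refine Finset.sum_congr rfl fun k _ => ?_
          rw [mul_diagonal, conjTranspose_apply]
      _ = ∑ k, ((B x k * p k : ℝ) : ℂ) := by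
          refine Finset.sum_congr rfl fun k _ => ?_
          push_cast
          rw [hB]
          simp only [Complex.star_def]
          rw [Complex.normSq_eq_conj_mul_self]
          ring
      _ = (d x : ℂ) := by rw [hd]; push_cast; rfl
  -- trace identities
  have hpsum : ∑ k, p k = 1 := by
    have e : ρ.trace = ∑ k, (p k : ℂ) := by
      conv_lhs => rw [h.spectral_theorem, Unitary.conjStarAlgAut_apply]
      rw [trace_mul_comm, ← Matrix.mul_assoc, hUu, Matrix.one_mul, trace_diagonal]
      exact Finset.sum_congr rfl fun k _ => rfl
    rw [hρtr] at e
    exact_mod_cast e.symm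
  have hdsum : ∑ x, d x = 1 := by
    simp only [hd]
    rw [Finset.sum_comm]
    calc ∑ k, ∑ x, B x k * p k = ∑ k, (∑ x, B x k) * p k :=
          Finset.sum_congr rfl fun k _ => (Finset.sum_mul _ _ _).symm
      _ = ∑ k, p k := by simp [hcol]
      _ = 1 := hpsum
  have hU₂c : U₂ * U₂ᴴ = 1 := by rw [← Matrix.star_eq_conjTranspose]; exact hU₂u'
  have hU₁c : U₁ * U₁ᴴ = 1 := by rw [← Matrix.star_eq_conjTranspose]; exact hU₁u'
  have hamarg : ∀ i, ∑ j, d (i, j) = a i := by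
    intro i
    have key : ((∑ j, d (i, j) : ℝ) : ℂ) = ((a i : ℝ) : ℂ) := by
      push_cast
      calc ∑ j, ((d (i, j) : ℝ) : ℂ) = ∑ j, (Wᴴ * ρ * W) (i, j) (i, j) :=
            Finset.sum_congr rfl fun j _ => (hdiag (i, j)).symm
        _ = (U₁ᴴ * (Matrix.of fun a c : I₁ => ∑ b : I₂, ρ (a, b) (c, b)) * U₁) i i := by
            rw [hWdef]; exact my_marg ρ U₁ U₂ hU₂c i
        _ = ((a i : ℝ) : ℂ) := by
            rw [hU₁, ← Matrix.star_eq_conjTranspose, ← Unitary.conjStarAlgAut_star_apply (S := ℂ),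
                h1.conjStarAlgAut_star_eigenvectorUnitary,
              diagonal_apply_eq, ha]
            rfl
    exact_mod_cast key
  have hbmarg : ∀ j, ∑ i, d (i, j) = b j := by
    intro j
    have key : ((∑ i, d (i, j) : ℝ) : ℂ) = ((b j : ℝ) : ℂ) := by
      push_cast
      calc ∑ i, ((d (i, j) : ℝ) : ℂ) = ∑ i, (Wᴴ * ρ * W) (i, j) (i, j) :=
            Finset.sum_congr rfl fun i _ => (hdiag (i, j)).symm
        _ = (U₂ᴴ * (Matrix.of fun a c : I₂ => ∑ k : I₁, ρ (k, a) (k, c)) * U₂) j j := by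
            rw [hWdef]; exact my_marg2 ρ U₁ U₂ hU₁c j
        _ = ((b j : ℝ) : ℂ) := by
            rw [hU₂, ← Matrix.star_eq_conjTranspose, ← Unitary.conjStarAlgAut_star_apply (S := ℂ),
                h2.conjStarAlgAut_star_eigenvectorUnitary,
              diagonal_apply_eq, hb]
            rfl
    exact_mod_cast key
  have step1 : ∑ x, d x * Real.log (d x) ≤ ∑ k, p k * Real.log (p k) := by
    simp only [hd]
    exact my_jensen B p hB0 hrow hcol hp0
  have step2 := my_classical_subadd d hd0 hdsum
  simp only [hamarg, hbmarg] at step2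
  unfold vnEntropy
  rw [dif_pos h, dif_pos h1, dif_pos h2, ← hp, ← ha, ← hb]
  linarith

end
end

section
/- (Multidimensional Fekete lemma underlying the existence of the mean entropy, eqs. (3.6.11)–(3.6.12)) Let ν ≥ 1, C ≥ 0, and let f : (Fin ν → ℕ) → ℝ satisfy: (i) 0 ≤ f(a) ≤ C·∏_{i} a_i for all a; (ii) f is subadditive in each coordinate, i.e. for every index i, every a : Fin ν → ℕ, and all m, n ∈ ℕ, f(update a i (m+n)) ≤ f(update a i m) + f(update a i n). Then, along the filter atTop on Fin ν → ℕ (i.e. as all coordinates a_i tend to infinity), f(a)/∏_i a_i converges to the infimum of f(b)/∏_i b_i taken over all b : Fin ν → ℕ with b_i > 0 for every i. -/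
open Filter Finset Function

section feketeAux

variable {ν : ℕ} {C : ℝ} {f : (Fin ν → ℕ) → ℝ}

private lemma fekete_nsmul
    (hsub : ∀ (i : Fin ν) (a : Fin ν → ℕ) (m n : ℕ),
      f (Function.update a i (m + n)) ≤ f (Function.update a i m) + f (Function.update a i n))
    (i : Fin ν) (x : Fin ν → ℕ) (b : ℕ) :
    ∀ n : ℕ, 1 ≤ n → f (update x i (n * b)) ≤ n * f (update x i b) := by
  intro n hn
  induction n with
  | zero => omega
  | succ k ih =>
    rcases Nat.lt_or_ge k 1 with hk | hk
    · interval_cases k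
      simp
    · have h1 : (k + 1) * b = k * b + b := by ring
      have h2 := hsub i x (k * b) b
      rw [h1]
      have h3 := ih hk
      push_cast
      linarith

private lemma fekete_key (hC : 0 ≤ C) (hf0 : ∀ a, 0 ≤ f a)
    (hfC : ∀ a, f a ≤ C * ∏ i, (a i : ℝ))
    (hsub : ∀ (i : Fin ν) (a : Fin ν → ℕ) (m n : ℕ),
      f (Function.update a i (m + n)) ≤ f (Function.update a i m) + f (Function.update a i n))
    (b a : Fin ν → ℕ) (hb : ∀ i, 1 ≤ b i) (hab : ∀ i, b i ≤ a i)
    (s : Finset (Fin ν)) :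
    f a ≤ (∏ i ∈ s, ((a i / b i : ℕ) : ℝ)) * f (s.piecewise b a)
      + C * ∑ i ∈ s, (b i : ℝ) * ∏ j ∈ Finset.univ \ {i}, (a j : ℝ) := by
  induction s using Finset.induction_on with
  | empty => simp
  | @insert i s hi ih =>
    set x := s.piecewise b a with hxdef
    have hxi : x i = a i := Finset.piecewise_eq_of_notMem _ _ _ hi
    have hxle : ∀ j, x j ≤ a j := by
      intro j
      by_cases hj : j ∈ s
      · simp [hxdef, Finset.piecewise_eq_of_mem _ _ _ hj, hab j]
      · simp [hxdef, Finset.piecewise_eq_of_notMem _ _ _ hj]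
    have hq1 : 1 ≤ a i / b i := (Nat.one_le_div_iff (hb i)).2 (hab i)
    -- step 1 : split coordinate i
    have step1 : f x ≤ ((a i / b i : ℕ) : ℝ) * f ((insert i s).piecewise b a)
        + f (update x i (a i % b i)) := by
      have e1 : update x i (b i * (a i / b i) + a i % b i) = x := by
        rw [Nat.div_add_mod, ← hxi, Function.update_eq_self]
      have h2 := hsub i x (b i * (a i / b i)) (a i % b i)
      rw [e1] at h2
      have h3 : f (update x i (b i * (a i / b i)))
          ≤ ((a i / b i : ℕ) : ℝ) * f (update x i (b i)) := by
        rw [mul_comm (b i)]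
        exact fekete_nsmul hsub i x (b i) _ hq1
      have h4 : (insert i s).piecewise b a = update x i (b i) := by
        rw [Finset.piecewise_insert]
      rw [h4]
      linarith
    -- step 2 : bound the remainder term
    have step2 : f (update x i (a i % b i))
        ≤ C * (((a i % b i : ℕ) : ℝ) * ∏ j ∈ Finset.univ \ {i}, (x j : ℝ)) := by
      have h1 := hfC (update x i (a i % b i))
      have h2 : ∏ j, ((update x i (a i % b i) j : ℕ) : ℝ)
          = ((a i % b i : ℕ) : ℝ) * ∏ j ∈ Finset.univ \ {i}, (x j : ℝ) := by
        have := Finset.prod_update_of_mem (Finset.mem_univ i)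
          (fun j => ((x j : ℕ) : ℝ)) ((a i % b i : ℕ) : ℝ)
        rw [← this]
        apply Finset.prod_congr rfl
        intro j _
        by_cases hj : j = i
        · subst hj; simp
        · simp [Function.update_of_ne hj]
      rw [h2] at h1
      exact h1
    -- step 3 : counting inequality in ℕ
    have step3 : (∏ j ∈ s, (a j / b j)) * ((a i % b i) * ∏ j ∈ Finset.univ \ {i}, x j)
        ≤ b i * ∏ j ∈ Finset.univ \ {i}, a j := by
      have hsub' : s ⊆ Finset.univ \ {i} := by
        intro j hj
        simp only [Finset.mem_sdiff, Finset.mem_univ, Finset.mem_singleton, true_and]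
        rintro rfl; exact hi hj
      have hxprod : ∏ j ∈ Finset.univ \ {i}, x j
          = (∏ j ∈ s, b j) * ∏ j ∈ (Finset.univ \ {i}) \ s, a j := by
        have := Finset.prod_piecewise (Finset.univ \ {i}) s b a
        rw [Finset.inter_eq_right.2 hsub'] at this
        exact this
      have hmain : (∏ j ∈ s, (a j / b j)) * ∏ j ∈ Finset.univ \ {i}, x j
          ≤ ∏ j ∈ Finset.univ \ {i}, a j := by
        rw [hxprod, ← mul_assoc, ← Finset.prod_mul_distrib]
        calc (∏ j ∈ s, (a j / b j * b j)) * ∏ j ∈ (Finset.univ \ {i}) \ s, a j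
            ≤ (∏ j ∈ s, a j) * ∏ j ∈ (Finset.univ \ {i}) \ s, a j := by
              apply Nat.mul_le_mul_right
              exact Finset.prod_le_prod' fun j _ => Nat.div_mul_le_self (a j) (b j)
          _ = ∏ j ∈ Finset.univ \ {i}, a j := by
              rw [mul_comm, Finset.prod_sdiff hsub']
      have hr : a i % b i ≤ b i := le_of_lt (Nat.mod_lt _ (hb i))
      calc (∏ j ∈ s, (a j / b j)) * ((a i % b i) * ∏ j ∈ Finset.univ \ {i}, x j)
          = (a i % b i) * ((∏ j ∈ s, (a j / b j)) * ∏ j ∈ Finset.univ \ {i}, x j) := by ring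
        _ ≤ b i * ∏ j ∈ Finset.univ \ {i}, a j := Nat.mul_le_mul hr hmain
    -- assemble
    have hQ : (0 : ℝ) ≤ ∏ j ∈ s, ((a j / b j : ℕ) : ℝ) := by positivity
    have step3R : (∏ j ∈ s, ((a j / b j : ℕ) : ℝ))
          * (((a i % b i : ℕ) : ℝ) * ∏ j ∈ Finset.univ \ {i}, (x j : ℝ))
        ≤ (b i : ℝ) * ∏ j ∈ Finset.univ \ {i}, (a j : ℝ) := by
      exact_mod_cast Nat.cast_le.2 step3 |>.trans_eq (by push_cast; ring)
    have hIH := ih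
    have hfx : f x ≤ ((a i / b i : ℕ) : ℝ) * f ((insert i s).piecewise b a)
        + C * (((a i % b i : ℕ) : ℝ) * ∏ j ∈ Finset.univ \ {i}, (x j : ℝ)) :=
      step1.trans (by linarith)
    have hmul := mul_le_mul_of_nonneg_left hfx hQ
    have e : (∏ j ∈ s, ((a j / b j : ℕ) : ℝ))
          * (((a i / b i : ℕ) : ℝ) * f ((insert i s).piecewise b a)
            + C * (((a i % b i : ℕ) : ℝ) * ∏ j ∈ Finset.univ \ {i}, (x j : ℝ)))
        = ((a i / b i : ℕ) : ℝ) * (∏ j ∈ s, ((a j / b j : ℕ) : ℝ))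
            * f ((insert i s).piecewise b a)
          + C * ((∏ j ∈ s, ((a j / b j : ℕ) : ℝ))
            * (((a i % b i : ℕ) : ℝ) * ∏ j ∈ Finset.univ \ {i}, (x j : ℝ))) := by ring
    rw [e] at hmul
    have hCmul : C * ((∏ j ∈ s, ((a j / b j : ℕ) : ℝ))
          * (((a i % b i : ℕ) : ℝ) * ∏ j ∈ Finset.univ \ {i}, (x j : ℝ)))
        ≤ C * ((b i : ℝ) * ∏ j ∈ Finset.univ \ {i}, (a j : ℝ)) :=
      mul_le_mul_of_nonneg_left step3R hC
    rw [Finset.prod_insert hi, Finset.sum_insert hi, mul_add]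
    linarith

private lemma fekete_div (hC : 0 ≤ C) (hf0 : ∀ a, 0 ≤ f a)
    (hfC : ∀ a, f a ≤ C * ∏ i, (a i : ℝ))
    (hsub : ∀ (i : Fin ν) (a : Fin ν → ℕ) (m n : ℕ),
      f (Function.update a i (m + n)) ≤ f (Function.update a i m) + f (Function.update a i n))
    (b a : Fin ν → ℕ) (hb : ∀ i, 1 ≤ b i) (hab : ∀ i, b i ≤ a i) :
    f a / ∏ i, (a i : ℝ) ≤ f b / ∏ i, (b i : ℝ) + C * ∑ i, (b i : ℝ) / (a i : ℝ) := by
  have ha1 : ∀ i, 1 ≤ a i := fun i => (hb i).trans (hab i)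
  have hV : (0 : ℝ) < ∏ i, (a i : ℝ) := by
    apply Finset.prod_pos
    intro i _
    exact_mod_cast Nat.lt_of_lt_of_le Nat.zero_lt_one (ha1 i)
  have hB : (0 : ℝ) < ∏ i, (b i : ℝ) := by
    apply Finset.prod_pos
    intro i _
    exact_mod_cast Nat.lt_of_lt_of_le Nat.zero_lt_one (hb i)
  have hkey := fekete_key hC hf0 hfC hsub b a hb hab Finset.univ
  rw [Finset.piecewise_univ] at hkey
  -- bound the product of quotients
  have hQB : (∏ i, ((a i / b i : ℕ) : ℝ)) * ∏ i, (b i : ℝ) ≤ ∏ i, (a i : ℝ) := by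
    rw [← Finset.prod_mul_distrib]
    have : ∀ i ∈ Finset.univ, ((a i / b i : ℕ) : ℝ) * (b i : ℝ) ≤ (a i : ℝ) := by
      intro i _
      exact_mod_cast Nat.div_mul_le_self (a i) (b i)
    exact Finset.prod_le_prod (fun i _ => by positivity) this
  have hQ : ∏ i, ((a i / b i : ℕ) : ℝ) ≤ (∏ i, (a i : ℝ)) / ∏ i, (b i : ℝ) :=
    (le_div_iff₀ hB).2 hQB
  have h1 : (∏ i, ((a i / b i : ℕ) : ℝ)) * f b
      ≤ (∏ i, (a i : ℝ)) * (f b / ∏ i, (b i : ℝ)) := by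
    calc (∏ i, ((a i / b i : ℕ) : ℝ)) * f b
        ≤ ((∏ i, (a i : ℝ)) / ∏ i, (b i : ℝ)) * f b :=
          mul_le_mul_of_nonneg_right hQ (hf0 b)
      _ = (∏ i, (a i : ℝ)) * (f b / ∏ i, (b i : ℝ)) := by ring
  have h2 : ∀ i, (b i : ℝ) * ∏ j ∈ Finset.univ \ {i}, (a j : ℝ)
      = (b i : ℝ) / (a i : ℝ) * ∏ j, (a j : ℝ) := by
    intro i
    have hai : (0 : ℝ) < (a i : ℝ) := by exact_mod_cast Nat.lt_of_lt_of_le Nat.zero_lt_one (ha1 i)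
    have : (a i : ℝ) * ∏ j ∈ (Finset.univ).erase i, (a j : ℝ) = ∏ j, (a j : ℝ) :=
      Finset.mul_prod_erase Finset.univ (fun j => ((a j : ℕ) : ℝ)) (Finset.mem_univ i)
    rw [Finset.sdiff_singleton_eq_erase, ← this]
    field_simp
  have h3 : C * ∑ i, (b i : ℝ) * ∏ j ∈ Finset.univ \ {i}, (a j : ℝ)
      = (∏ i, (a i : ℝ)) * (C * ∑ i, (b i : ℝ) / (a i : ℝ)) := by
    rw [Finset.sum_congr rfl fun i _ => h2 i, ← Finset.sum_mul]
    ring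
  rw [div_le_iff₀ hV]
  calc f a ≤ (∏ i, ((a i / b i : ℕ) : ℝ)) * f b
        + C * ∑ i, (b i : ℝ) * ∏ j ∈ Finset.univ \ {i}, (a j : ℝ) := hkey
    _ ≤ (∏ i, (a i : ℝ)) * (f b / ∏ i, (b i : ℝ))
        + (∏ i, (a i : ℝ)) * (C * ∑ i, (b i : ℝ) / (a i : ℝ)) := by
        rw [h3] at *
        linarith
    _ = (f b / ∏ i, (b i : ℝ) + C * ∑ i, (b i : ℝ) / (a i : ℝ)) * ∏ i, (a i : ℝ) := by ring

end feketeAux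

/-- **Multidimensional Fekete lemma** underlying the existence of the mean entropy
(eqs. (3.6.11)–(3.6.12)): if `f` on `ν`-tuples of naturals is nonnegative, bounded by a
constant times the volume `∏ i, a i`, and subadditive in each coordinate, then
`f a / ∏ i, a i` converges, as all coordinates tend to infinity, to the infimum of
`f b / ∏ i, b i` over tuples `b` with all coordinates positive. -/
theorem multidim_fekete (ν : ℕ) (hν : 1 ≤ ν) (C : ℝ) (hC : 0 ≤ C)
    (f : (Fin ν → ℕ) → ℝ)
    (hf0 : ∀ a, 0 ≤ f a)
    (hfC : ∀ a, f a ≤ C * ∏ i, (a i : ℝ))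
    (hsub : ∀ (i : Fin ν) (a : Fin ν → ℕ) (m n : ℕ),
      f (Function.update a i (m + n)) ≤ f (Function.update a i m) + f (Function.update a i n)) :
    Tendsto (fun a : Fin ν → ℕ => f a / ∏ i, (a i : ℝ)) atTop
      (nhds (⨅ b : {b : Fin ν → ℕ // ∀ i, 0 < b i}, f b.1 / ∏ i, (b.1 i : ℝ))) := by
  haveI : Nonempty {b : Fin ν → ℕ // ∀ i, 0 < b i} := ⟨⟨fun _ => 1, fun _ => one_pos⟩⟩
  set g : (Fin ν → ℕ) → ℝ := fun a => f a / ∏ i, (a i : ℝ) with hg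
  set L : ℝ := ⨅ b : {b : Fin ν → ℕ // ∀ i, 0 < b i}, g b.1 with hL
  have hbdd : BddBelow (Set.range fun b : {b : Fin ν → ℕ // ∀ i, 0 < b i} => g b.1) := by
    refine ⟨0, ?_⟩
    rintro y ⟨b, rfl⟩
    have : (0:ℝ) ≤ ∏ i, (b.1 i : ℝ) := by positivity
    exact div_nonneg (hf0 b.1) this
  rw [tendsto_order]
  constructor
  · intro c hc
    filter_upwards [eventually_ge_atTop (fun _ => 1 : Fin ν → ℕ)] with a ha
    have hpos : ∀ i, 0 < a i := fun i => ha i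
    exact hc.trans_le (ciInf_le hbdd ⟨a, hpos⟩)
  · intro c hc
    obtain ⟨b, hbc⟩ := exists_lt_of_ciInf_lt (show L < (L + c) / 2 by linarith)
    have hb1 : ∀ i, 1 ≤ b.1 i := fun i => b.2 i
    set S : ℝ := ∑ i, (b.1 i : ℝ) with hS
    have hS0 : 0 ≤ S := by positivity
    obtain ⟨M, hM⟩ := exists_nat_gt (2 * C * S / (c - L))
    set N : ℕ := M + 1 with hN
    have hN0 : (0:ℝ) < (N:ℝ) := by positivity
    have hNgt : 2 * C * S / (c - L) < (N : ℝ) := by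
      have : (M : ℝ) ≤ (N : ℝ) := by exact_mod_cast Nat.le_succ M
      linarith
    have hCSN : C * S / N < (c - L) / 2 := by
      rw [div_lt_iff₀ hN0]
      have hcL : (0:ℝ) < c - L := by linarith
      have := (div_lt_iff₀ hcL).1 hNgt
      nlinarith
    filter_upwards [eventually_ge_atTop (fun i => max (b.1 i) N)] with a ha
    have hab : ∀ i, b.1 i ≤ a i := fun i => le_trans (le_max_left _ _) (ha i)
    have haN : ∀ i, N ≤ a i := fun i => le_trans (le_max_right _ _) (ha i)
    have hdiv := fekete_div hC hf0 hfC hsub b.1 a hb1 hab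
    have hsum : ∑ i, (b.1 i : ℝ) / (a i : ℝ) ≤ S / N := by
      rw [hS, Finset.sum_div]
      apply Finset.sum_le_sum
      intro i _
      apply div_le_div_of_nonneg_left (by positivity) hN0
      exact_mod_cast haN i
    have herr : C * ∑ i, (b.1 i : ℝ) / (a i : ℝ) ≤ C * S / N := by
      calc C * ∑ i, (b.1 i : ℝ) / (a i : ℝ) ≤ C * (S / N) :=
            mul_le_mul_of_nonneg_left hsum hC
        _ = C * S / N := by ring
    have : g a ≤ g b.1 + C * S / N := le_trans hdiv (by linarith)
    calc g a ≤ g b.1 + C * S / N := this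
      _ < (L + c) / 2 + (c - L) / 2 := by linarith
      _ = c := by ring
end

section
/- (Fannes' continuity estimate for the entropy, inequality (3.6.19)) Let d ≥ 1 and let ρ₁, ρ₂ be density matrices on ℂ^d. Let λ¹, λ² : Fin d → ℝ list the eigenvalues of ρ₁ and ρ₂, respectively, with multiplicity in nondecreasing order, and set a = ∑_k |λ¹_k − λ²_k|. Then |S(ρ₁) − S(ρ₂)| ≤ a·log d + e, where e = exp(1) is Euler's number. -/
open Matrix Complex Polynomial
open scoped ComplexOrder

noncomputable section

section FannesAux

lemma fannes_charpoly_diagonal' {n : Type*} [Fintype n] [DecidableEq n] {R : Type*} [CommRing R]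
    (v : n → R) : (Matrix.diagonal v).charpoly = ∏ i, (X - C (v i)) := by
  have h : charmatrix (Matrix.diagonal v) = Matrix.diagonal (fun i => (X : R[X]) - C (v i)) := by
    ext i j
    by_cases h : i = j
    · subst h; simp [charmatrix_apply_eq]
    · simp [charmatrix_apply_ne _ _ _ h, Matrix.diagonal_apply_ne _ h]
  rw [Matrix.charpoly, h, Matrix.det_diagonal]

lemma fannes_charpoly_conj' {n : Type*} [Fintype n] [DecidableEq n] {R : Type*} [CommRing R]
    (M N B : Matrix n n R) (h1 : M * N = 1) :
    (M * B * N).charpoly = B.charpoly := by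
  have key : charmatrix (M * B * N) = M.map C * charmatrix B * N.map C := by
    simp only [charmatrix, Matrix.map_mul]
    rw [mul_sub, sub_mul]
    congr 1
    · rw [mul_assoc, scalar_commute (X : R[X]) (Commute.all _) (N.map C)]
      rw [← mul_assoc, ← Matrix.map_mul, h1]
      simp [Matrix.scalar]
    · simp [RingHom.mapMatrix_apply, Matrix.map_mul, mul_assoc]
  have hdet : (M.map C).det * (N.map C).det = 1 := by
    rw [← Matrix.det_mul, ← Matrix.map_mul, h1]; simp
  rw [Matrix.charpoly, key, Matrix.det_mul, Matrix.det_mul, Matrix.charpoly]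
  calc (M.map C).det * (charmatrix B).det * (N.map C).det
      = (charmatrix B).det * ((M.map C).det * (N.map C).det) := by ring
    _ = (charmatrix B).det := by rw [hdet, mul_one]

lemma fannes_charpoly_isHermitian {n : Type*} [Fintype n] [DecidableEq n]
    {A : Matrix n n ℂ} (hA : A.IsHermitian) :
    A.charpoly = ∏ i, (X - C ((hA.eigenvalues i : ℝ) : ℂ)) := by
  conv_lhs => rw [hA.spectral_theorem]
  rw [Unitary.conjStarAlgAut_apply]
  rw [fannes_charpoly_conj' _ _ _ (Matrix.mem_unitaryGroup_iff.mp (hA.eigenvectorUnitary).2)]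
  rw [fannes_charpoly_diagonal']
  rfl

lemma fannes_multiset_eq_of_prod_X_sub_C {d : ℕ} (a b : Fin d → ℂ)
    (h : ∏ k, (X - C (a k)) = ∏ k, (X - C (b k))) :
    Multiset.map a Finset.univ.val = Multiset.map b Finset.univ.val := by
  have ha := Polynomial.roots_multiset_prod_X_sub_C (Multiset.map a Finset.univ.val)
  have hb := Polynomial.roots_multiset_prod_X_sub_C (Multiset.map b Finset.univ.val)
  rw [← ha, ← hb]
  congr 1
  rw [Multiset.map_map, Multiset.map_map]
  exact h

lemma fannes_real_multiset_eq {d : ℕ} (a b : Fin d → ℝ)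
    (h : Multiset.map (fun k => ((a k : ℝ) : ℂ)) Finset.univ.val
       = Multiset.map (fun k => ((b k : ℝ) : ℂ)) Finset.univ.val) :
    Multiset.map a Finset.univ.val = Multiset.map b Finset.univ.val := by
  apply Multiset.map_injective Complex.ofReal_injective
  rw [Multiset.map_map, Multiset.map_map]
  exact h

lemma fannes_sum_comp_eq {d : ℕ} {a b : Fin d → ℝ}
    (h : Multiset.map a Finset.univ.val = Multiset.map b Finset.univ.val) (f : ℝ → ℝ) :
    ∑ k, f (a k) = ∑ k, f (b k) := by
  have h2 : Multiset.map (f ∘ a) Finset.univ.val = Multiset.map (f ∘ b) Finset.univ.val := by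
    rw [← Multiset.map_map f a, ← Multiset.map_map f b, h]
  simpa [Finset.sum, Function.comp] using congrArg Multiset.sum h2

lemma fannes_eta_le {p q : ℝ} (hq : 0 ≤ q) (hpq : q ≤ p) (hp1 : p ≤ 1) :
    |Real.negMulLog p - Real.negMulLog q| ≤ Real.negMulLog (p - q) + (p - q) := by
  set ε := p - q with hε
  have hε0 : 0 ≤ ε := by linarith
  have hε1 : ε ≤ 1 := by linarith
  have hηε : 0 ≤ Real.negMulLog ε := Real.negMulLog_nonneg hε0 hε1
  rw [abs_le]
  constructor
  · rcases eq_or_lt_of_le hq with hq0 | hq0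
    · simp only [← hq0, Real.negMulLog_zero]
      have : 0 ≤ Real.negMulLog p := Real.negMulLog_nonneg (by linarith) hp1
      linarith
    · have hp0 : 0 < p := lt_of_lt_of_le hq0 hpq
      have key : Real.negMulLog q - Real.negMulLog p ≤ ε := by
        have h1 : Real.negMulLog q - Real.negMulLog p = q * (Real.log p - Real.log q) + ε * Real.log p := by
          simp only [Real.negMulLog, hε]; ring
        have h2 : Real.log p - Real.log q ≤ p / q - 1 := by
          rw [← Real.log_div (ne_of_gt hp0) (ne_of_gt hq0)]
          exact Real.log_le_sub_one_of_pos (div_pos hp0 hq0)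
        have h3 : q * (Real.log p - Real.log q) ≤ q * (p / q - 1) :=
          mul_le_mul_of_nonneg_left h2 hq
        have h4 : q * (p / q - 1) = ε := by field_simp; exact hε.symm
        have h5 : ε * Real.log p ≤ 0 :=
          mul_nonpos_of_nonneg_of_nonpos hε0 (Real.log_nonpos hp0.le hp1)
        linarith
      linarith
  · have key : Real.negMulLog p ≤ Real.negMulLog q + Real.negMulLog ε := by
      rcases eq_or_lt_of_le hq with hq0 | hq0
      · simp only [← hq0, Real.negMulLog_zero, zero_add, hε]; ring_nf
        simp [Real.negMulLog]
      rcases eq_or_lt_of_le hε0 with hε0' | hε0'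
      · have : p = q := by linarith [hε0'.symm ▸ hε]
        simp [← hε0', this]
      · have hp0 : 0 < p := lt_of_lt_of_le hq0 hpq
        have h1 : -p * Real.log p = -q * Real.log p + -ε * Real.log p := by
          rw [hε]; ring
        have h2 : -q * Real.log p ≤ -q * Real.log q := by
          have := Real.log_le_log hq0 hpq
          nlinarith
        have h3 : -ε * Real.log p ≤ -ε * Real.log ε := by
          have hεp : ε ≤ p := by linarith
          have := Real.log_le_log hε0' hεp
          nlinarith
        simp only [Real.negMulLog]
        linarith
    linarith

lemma fannes_jensen_eta {d : ℕ} (hd : 0 < d) (ε : Fin d → ℝ) (hε : ∀ k, 0 ≤ ε k) :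
    ∑ k, Real.negMulLog (ε k) ≤ d * Real.negMulLog ((∑ k, ε k) / d) := by
  have hd' : (0:ℝ) < d := Nat.cast_pos.mpr hd
  have key := Real.concaveOn_negMulLog.le_map_sum (t := Finset.univ)
    (w := fun _ : Fin d => (d:ℝ)⁻¹) (p := ε)
    (fun i _ => by positivity)
    (by simp [Finset.card_univ]; field_simp)
    (fun i _ => hε i)
  simp only [smul_eq_mul, ← Finset.mul_sum] at key
  have h2 : (d:ℝ)⁻¹ * ∑ k, ε k = (∑ k, ε k) / d := by ring
  rw [h2] at key
  calc ∑ k, Real.negMulLog (ε k) = d * ((d:ℝ)⁻¹ * ∑ k, Real.negMulLog (ε k)) := by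
        field_simp
    _ ≤ d * Real.negMulLog ((∑ k, ε k) / d) := mul_le_mul_of_nonneg_left key hd'.le

lemma fannes_self_sub_mul_log_le_one {a : ℝ} (ha : 0 ≤ a) : a - a * Real.log a ≤ 1 := by
  rcases eq_or_lt_of_le ha with h | h
  · simp [← h]
  · have h1 : -Real.log a ≤ a⁻¹ - 1 := by
      rw [← Real.log_inv]; exact Real.log_le_sub_one_of_pos (inv_pos.mpr h)
    have h2 := mul_le_mul_of_nonneg_left h1 ha
    have h3 : a * a⁻¹ = 1 := mul_inv_cancel₀ (ne_of_gt h)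
    nlinarith

lemma fannes_eta_abs {p q : ℝ} (hp0 : 0 ≤ p) (hp1 : p ≤ 1) (hq0 : 0 ≤ q) (hq1 : q ≤ 1) :
    |Real.negMulLog p - Real.negMulLog q| ≤ Real.negMulLog |p - q| + |p - q| := by
  rcases le_total q p with h | h
  · rw [_root_.abs_of_nonneg (by linarith : (0:ℝ) ≤ p - q)]
    exact fannes_eta_le hq0 h hp1
  · rw [abs_sub_comm, abs_sub_comm p q]
    rw [_root_.abs_of_nonneg (by linarith : (0:ℝ) ≤ q - p)]
    exact fannes_eta_le hp0 h hq1

end FannesAux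

/-- **Fannes' continuity estimate for the entropy** (inequality (3.6.19)): if `λ¹, λ²` list
(in nondecreasing order, with multiplicity) the eigenvalues of the density matrices
`ρ₁, ρ₂` on `ℂ^d` and `a = ∑_k |λ¹_k - λ²_k|`, then `|S(ρ₁) - S(ρ₂)| ≤ a Real.log d + e`. -/
theorem fannes_entropy_estimate (d : ℕ) (hd : 1 ≤ d)
    (ρ₁ ρ₂ : Matrix (Fin d) (Fin d) ℂ)
    (hρ₁ : ρ₁.PosSemidef) (hρ₁tr : ρ₁.trace = 1)
    (hρ₂ : ρ₂.PosSemidef) (hρ₂tr : ρ₂.trace = 1)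
    (lam₁ lam₂ : Fin d → ℝ) (hmono₁ : Monotone lam₁) (hmono₂ : Monotone lam₂)
    (heig₁ : ρ₁.charpoly = ∏ k, (X - C ((lam₁ k : ℝ) : ℂ)))
    (heig₂ : ρ₂.charpoly = ∏ k, (X - C ((lam₂ k : ℝ) : ℂ))) :
    |vnEntropy ρ₁ - vnEntropy ρ₂|
      ≤ (∑ k, |lam₁ k - lam₂ k|) * Real.log d + Real.exp 1 := by
  have hd' : (0:ℝ) < d := by exact_mod_cast hd
  have hH1 := hρ₁.isHermitian
  have hH2 := hρ₂.isHermitian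
  have hm1 : Multiset.map hH1.eigenvalues Finset.univ.val = Multiset.map lam₁ Finset.univ.val :=
    fannes_real_multiset_eq _ _ (fannes_multiset_eq_of_prod_X_sub_C _ _
      ((fannes_charpoly_isHermitian hH1).symm.trans heig₁))
  have hm2 : Multiset.map hH2.eigenvalues Finset.univ.val = Multiset.map lam₂ Finset.univ.val :=
    fannes_real_multiset_eq _ _ (fannes_multiset_eq_of_prod_X_sub_C _ _
      ((fannes_charpoly_isHermitian hH2).symm.trans heig₂))
  -- entropies in terms of the given eigenvalue lists
  have hS1 : vnEntropy ρ₁ = ∑ k, Real.negMulLog (lam₁ k) := by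
    rw [vnEntropy, dif_pos hH1, ← fannes_sum_comp_eq hm1 Real.negMulLog]
    simp [Real.negMulLog, neg_mul, Finset.sum_neg_distrib]
  have hS2 : vnEntropy ρ₂ = ∑ k, Real.negMulLog (lam₂ k) := by
    rw [vnEntropy, dif_pos hH2, ← fannes_sum_comp_eq hm2 Real.negMulLog]
    simp [Real.negMulLog, neg_mul, Finset.sum_neg_distrib]
  -- the lists are probability vectors
  have hnn1 : ∀ k, 0 ≤ lam₁ k := by
    have h0 := fannes_sum_comp_eq hm1 (fun x => |x| - x)
    have hz : ∑ i, (|hH1.eigenvalues i| - hH1.eigenvalues i) = 0 :=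
      Finset.sum_eq_zero fun i _ => by
        rw [_root_.abs_of_nonneg (hρ₁.eigenvalues_nonneg i)]; ring
    have := (Finset.sum_eq_zero_iff_of_nonneg
      (fun k _ => by simp [abs_nonneg, le_abs_self] : ∀ k ∈ Finset.univ, 0 ≤ |lam₁ k| - lam₁ k)).mp
      (by rw [← h0, hz])
    intro k
    have hk := this k (Finset.mem_univ k)
    have : |lam₁ k| = lam₁ k := by linarith
    exact abs_eq_self.mp this
  have hnn2 : ∀ k, 0 ≤ lam₂ k := by
    have h0 := fannes_sum_comp_eq hm2 (fun x => |x| - x)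
    have hz : ∑ i, (|hH2.eigenvalues i| - hH2.eigenvalues i) = 0 :=
      Finset.sum_eq_zero fun i _ => by
        rw [_root_.abs_of_nonneg (hρ₂.eigenvalues_nonneg i)]; ring
    have := (Finset.sum_eq_zero_iff_of_nonneg
      (fun k _ => by simp [abs_nonneg, le_abs_self] : ∀ k ∈ Finset.univ, 0 ≤ |lam₂ k| - lam₂ k)).mp
      (by rw [← h0, hz])
    intro k
    have hk := this k (Finset.mem_univ k)
    have : |lam₂ k| = lam₂ k := by linarith
    exact abs_eq_self.mp this
  have hsum1 : ∑ k, lam₁ k = 1 := by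
    have htr : ρ₁.trace = ((∑ k, lam₁ k : ℝ) : ℂ) := by
      rw [Matrix.trace_eq_sum_roots_charpoly, heig₁]
      have hroots : (∏ k, (X - C ((lam₁ k : ℝ) : ℂ))).roots
          = Multiset.map (fun k => ((lam₁ k : ℝ) : ℂ)) Finset.univ.val := by
        rw [← Polynomial.roots_multiset_prod_X_sub_C
          (Multiset.map (fun k => ((lam₁ k : ℝ) : ℂ)) Finset.univ.val)]
        congr 1
        rw [Multiset.map_map]
        rfl
      rw [hroots]
      push_cast
      rfl
    rw [hρ₁tr] at htr
    exact_mod_cast htr.symm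
  have hsum2 : ∑ k, lam₂ k = 1 := by
    have htr : ρ₂.trace = ((∑ k, lam₂ k : ℝ) : ℂ) := by
      rw [Matrix.trace_eq_sum_roots_charpoly, heig₂]
      have hroots : (∏ k, (X - C ((lam₂ k : ℝ) : ℂ))).roots
          = Multiset.map (fun k => ((lam₂ k : ℝ) : ℂ)) Finset.univ.val := by
        rw [← Polynomial.roots_multiset_prod_X_sub_C
          (Multiset.map (fun k => ((lam₂ k : ℝ) : ℂ)) Finset.univ.val)]
        congr 1
        rw [Multiset.map_map]
        rfl
      rw [hroots]
      push_cast
      rfl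
    rw [hρ₂tr] at htr
    exact_mod_cast htr.symm
  have hle1 : ∀ k, lam₁ k ≤ 1 := fun k => by
    calc lam₁ k ≤ ∑ j, lam₁ j :=
      Finset.single_le_sum (fun j _ => hnn1 j) (Finset.mem_univ k)
    _ = 1 := hsum1
  have hle2 : ∀ k, lam₂ k ≤ 1 := fun k => by
    calc lam₂ k ≤ ∑ j, lam₂ j :=
      Finset.single_le_sum (fun j _ => hnn2 j) (Finset.mem_univ k)
    _ = 1 := hsum2
  set a : ℝ := ∑ k, |lam₁ k - lam₂ k| with ha_def
  have ha0 : 0 ≤ a := Finset.sum_nonneg fun k _ => abs_nonneg _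
  rcases eq_or_lt_of_le ha0 with ha | ha
  · -- a = 0 : the two eigenvalue lists coincide
    have heq : ∀ k ∈ Finset.univ, |lam₁ k - lam₂ k| = 0 :=
      (Finset.sum_eq_zero_iff_of_nonneg (fun k _ => abs_nonneg _)).mp ha.symm
    have hSeq : ∑ k, Real.negMulLog (lam₁ k) = ∑ k, Real.negMulLog (lam₂ k) :=
      Finset.sum_congr rfl fun k _ => by
        have : lam₁ k = lam₂ k := by
          have := abs_eq_zero.mp (heq k (Finset.mem_univ k)); linarith
        rw [this]
    rw [hS1, hS2, hSeq, sub_self, abs_zero]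
    positivity
  · -- a > 0
    have step1 : |vnEntropy ρ₁ - vnEntropy ρ₂|
        ≤ ∑ k, (Real.negMulLog |lam₁ k - lam₂ k| + |lam₁ k - lam₂ k|) := by
      rw [hS1, hS2, ← Finset.sum_sub_distrib]
      refine le_trans (Finset.abs_sum_le_sum_abs _ _) ?_
      exact Finset.sum_le_sum fun k _ =>
        fannes_eta_abs (hnn1 k) (hle1 k) (hnn2 k) (hle2 k)
    have step2 : ∑ k, (Real.negMulLog |lam₁ k - lam₂ k| + |lam₁ k - lam₂ k|)
        = (∑ k, Real.negMulLog |lam₁ k - lam₂ k|) + a := by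
      rw [Finset.sum_add_distrib]
    have step3 : ∑ k, Real.negMulLog |lam₁ k - lam₂ k| ≤ d * Real.negMulLog (a / d) := by
      have := fannes_jensen_eta (Nat.lt_of_lt_of_le Nat.zero_lt_one hd)
        (fun k => |lam₁ k - lam₂ k|) (fun k => abs_nonneg _)
      simpa using this
    have step4 : (d : ℝ) * Real.negMulLog (a / d) = a * Real.log d - a * Real.log a := by
      rw [Real.negMulLog, Real.log_div (ne_of_gt ha) (ne_of_gt hd')]
      field_simp
      ring
    have step5 : a - a * Real.log a ≤ Real.exp 1 :=
      le_trans (fannes_self_sub_mul_log_le_one ha0) (by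
        have := Real.add_one_le_exp (1 : ℝ)
        linarith)
    calc |vnEntropy ρ₁ - vnEntropy ρ₂|
        ≤ (∑ k, Real.negMulLog |lam₁ k - lam₂ k|) + a := by rw [← step2]; exact step1
      _ ≤ (d * Real.negMulLog (a / d)) + a := by linarith [step3]
      _ = a * Real.log d + (a - a * Real.log a) := by rw [step4]; ring
      _ ≤ a * Real.log d + Real.exp 1 := by linarith [step5]

end
end
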